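/- Let V : [0,∞) → ℝ be a right-continuous function with left limits, of finite variation on every compact interval. Let f : ℝ → ℝ be of class C¹. Then for every t > 0, f(V(t)) − f(V(0)) = ∫_ℝ f'(x) ℓ^x(t) dx + Σ_{0<s≤t} ( f(V(s)) − f(V(s−)) ), where x ↦ ℓ^x(t) is defined for Lebesgue-almost every x and the sum is absolutely convergent. -/

import Mathlib

open MeasureTheory Set Filter
open scoped ENNReal NNReal

noncomputable section

/-- `V` increases through the level `x` at time `t`: `t > 0`, `V t = x`, `V` is continuous
at `t` (within the domain `[0,∞)`), and `V s - V t` has the same sign as `s - t` for all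
`s ≥ 0` in some neighborhood of `t`. -/
def IncreasesThrough (V : ℝ → ℝ) (x t : ℝ) : Prop :=
  0 < t ∧ V t = x ∧ ContinuousWithinAt V (Set.Ici 0) t ∧
    ∃ ε > 0, ∀ s ∈ Set.Ici (0 : ℝ), |s - t| < ε →
      ((s < t → V s < V t) ∧ (t < s → V t < V s))

/-- `V` decreases through the level `x` at time `t` iff `-V` increases through `-x` at `t`. -/
def DecreasesThrough (V : ℝ → ℝ) (x t : ℝ) : Prop :=
  IncreasesThrough (fun s => -V s) (-x) t

/-- `(0,t] ∩ ℐ(x)`: the increasing passage times of `V` through `x` up to time `t`. -/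
def incSet (V : ℝ → ℝ) (x t : ℝ) : Set ℝ :=
  {s | s ∈ Set.Ioc 0 t ∧ IncreasesThrough V x s}

/-- `(0,t] ∩ 𝒟(x)`: the decreasing passage times of `V` through `x` up to time `t`. -/
def decSet (V : ℝ → ℝ) (x t : ℝ) : Set ℝ :=
  {s | s ∈ Set.Ioc 0 t ∧ DecreasesThrough V x s}

/-- The signed local time `ℓ^x(t) = Card((0,t] ∩ ℐ(x)) − Card((0,t] ∩ 𝒟(x))`
(meaningful when both sets are finite). -/
def signedLocalTime (V : ℝ → ℝ) (x t : ℝ) : ℤ :=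
  ((incSet V x t).ncard : ℤ) - ((decSet V x t).ncard : ℤ)

/-- The absolute local time `λ^x(t) = Card((0,t] ∩ ℐ(x)) + Card((0,t] ∩ 𝒟(x))`
(meaningful when both sets are finite). -/
def absLocalTime (V : ℝ → ℝ) (x t : ℝ) : ℕ :=
  (incSet V x t).ncard + (decSet V x t).ncard

namespace CVLT

lemma jump_finset_sum_le_aux (V Vm : ℝ → ℝ) (t : ℝ)
    (hV_ll : ∀ s ∈ Set.Ioi (0 : ℝ),
      Filter.Tendsto V (nhdsWithin s (Set.Iio s)) (nhds (Vm s))) :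
    ∀ n : ℕ, ∀ F : Finset ℝ, F.card = n → (∀ s ∈ F, s ∈ Set.Ioc 0 t) →
      ∀ ε : ℝ, 0 < ε → ∀ b, b ∈ Set.Icc 0 t → (∀ s ∈ F, s ≤ b) →
      ∑ s ∈ F, ENNReal.ofReal |V s - Vm s| ≤
        eVariationOn V (Set.Icc 0 t ∩ Set.Icc 0 b) + n * ENNReal.ofReal ε := by
  intro n
  induction n with
  | zero =>
    intro F hcard _ ε hε b hb _
    rw [Finset.card_eq_zero.mp hcard]
    simp
  | succ n IH =>
    intro F hcard hF ε hε b hb hFb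
    have hne : F.Nonempty := Finset.card_pos.mp (by omega)
    set M := F.max' hne with hM
    have hMF : M ∈ F := F.max'_mem hne
    have hMt : M ∈ Set.Ioc 0 t := hF M hMF
    set F' := F.erase M with hF'
    have hcard' : F'.card = n := by
      rw [hF', Finset.card_erase_of_mem hMF, hcard]; omega
    have hF'lt : ∀ s ∈ F', s < M := fun s hs =>
      lt_of_le_of_ne (F.le_max' s (Finset.mem_of_mem_erase hs)) (Finset.ne_of_mem_erase hs)
    -- cutoff c below M dominating F'
    set c : ℝ := if h : F'.Nonempty then max (F'.max' h) 0 else 0 with hc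
    have hc0 : 0 ≤ c := by
      rw [hc]; split_ifs <;> simp
    have hcM : c < M := by
      rw [hc]; split_ifs with h
      · exact max_lt (hF'lt _ (F'.max'_mem h)) hMt.1
      · exact hMt.1
    have hF'c : ∀ s ∈ F', s ≤ c := by
      intro s hs
      rw [hc]; split_ifs with h
      · exact le_max_of_le_left (F'.le_max' s hs)
      · exact absurd ⟨s, hs⟩ h
    -- choose u ∈ (c, M) with |V u - Vm M| < ε
    have hll := hV_ll M hMt.1
    have hev : ∀ᶠ r in nhdsWithin M (Set.Iio M), |V r - Vm M| < ε := by
      have : Set.Ioo (Vm M - ε) (Vm M + ε) ∈ nhds (Vm M) := by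
        apply Ioo_mem_nhds <;> linarith
      filter_upwards [hll this] with r hr
      rw [abs_sub_lt_iff]
      constructor <;> linarith [hr.1, hr.2]
    have hev2 : ∀ᶠ r in nhdsWithin M (Set.Iio M), r ∈ Set.Ioo c M :=
      Ioo_mem_nhdsLT_of_mem ⟨hcM, le_refl M⟩
    haveI : (nhdsWithin M (Set.Iio M)).NeBot := nhdsLT_neBot M
    obtain ⟨u, hu1, hu2⟩ := (hev.and hev2).exists
    have hu0 : 0 ≤ u := le_trans hc0 hu2.1.le
    have hut : u ≤ t := hu2.2.le.trans hMt.2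
    -- apply IH to F' with cutoff u
    have hIH := IH F' hcard' (fun s hs => hF s (Finset.mem_of_mem_erase hs)) ε hε u
      ⟨hu0, hut⟩ (fun s hs => (hF'c s hs).trans hu2.1.le)
    -- variation pieces
    have hsplit : eVariationOn V (Set.Icc 0 t ∩ Set.Icc 0 u)
        + eVariationOn V (Set.Icc 0 t ∩ Set.Icc u M)
        = eVariationOn V (Set.Icc 0 t ∩ Set.Icc 0 M) :=
      eVariationOn.Icc_add_Icc V hu0 hu2.2.le ⟨hu0, hut⟩
    have hedist : ENNReal.ofReal |V M - V u| ≤ eVariationOn V (Set.Icc 0 t ∩ Set.Icc u M) := by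
      have := eVariationOn.edist_le V (s := Set.Icc 0 t ∩ Set.Icc u M)
        (x := M) (y := u) ⟨⟨hMt.1.le, hMt.2⟩, ⟨hu2.2.le, le_refl M⟩⟩
        ⟨⟨hu0, hut⟩, ⟨le_refl u, hu2.2.le⟩⟩
      rwa [edist_dist, Real.dist_eq] at this
    have hjM : ENNReal.ofReal |V M - Vm M| ≤ ENNReal.ofReal |V M - V u| + ENNReal.ofReal ε := by
      calc ENNReal.ofReal |V M - Vm M| ≤ ENNReal.ofReal (|V M - V u| + |V u - Vm M|) := by
            apply ENNReal.ofReal_le_ofReal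
            have := abs_sub_le (V M) (V u) (Vm M)
            linarith [this]
        _ ≤ ENNReal.ofReal (|V M - V u| + ε) := ENNReal.ofReal_le_ofReal (by linarith [hu1])
        _ ≤ _ := ENNReal.ofReal_add_le
    have hsum : ∑ s ∈ F, ENNReal.ofReal |V s - Vm s|
        = ∑ s ∈ F', ENNReal.ofReal |V s - Vm s| + ENNReal.ofReal |V M - Vm M| := by
      rw [hF', Finset.sum_erase_add F _ hMF]
    rw [hsum]
    calc ∑ s ∈ F', ENNReal.ofReal |V s - Vm s| + ENNReal.ofReal |V M - Vm M|
        ≤ (eVariationOn V (Set.Icc 0 t ∩ Set.Icc 0 u) + n * ENNReal.ofReal ε)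
          + (ENNReal.ofReal |V M - V u| + ENNReal.ofReal ε) := add_le_add hIH hjM
      _ = (eVariationOn V (Set.Icc 0 t ∩ Set.Icc 0 u) + ENNReal.ofReal |V M - V u|)
            + ((n : ℝ≥0∞) * ENNReal.ofReal ε + ENNReal.ofReal ε) := by ring
      _ ≤ (eVariationOn V (Set.Icc 0 t ∩ Set.Icc 0 u)
            + eVariationOn V (Set.Icc 0 t ∩ Set.Icc u M)) + (↑(n + 1) : ℝ≥0∞) * ENNReal.ofReal ε := by
          push_cast
          have harith : ((n : ℝ≥0∞) + 1) * ENNReal.ofReal ε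
              = (n : ℝ≥0∞) * ENNReal.ofReal ε + ENNReal.ofReal ε := by ring
          rw [harith]
          gcongr
      _ = eVariationOn V (Set.Icc 0 t ∩ Set.Icc 0 M) + (↑(n + 1) : ℝ≥0∞) * ENNReal.ofReal ε := by
          rw [hsplit]
      _ ≤ eVariationOn V (Set.Icc 0 t ∩ Set.Icc 0 b) + (↑(n + 1) : ℝ≥0∞) * ENNReal.ofReal ε := by
          gcongr
          exact eVariationOn.mono V
            (Set.inter_subset_inter_right _ (Set.Icc_subset_Icc_right (hFb M hMF)))

/-- Jump sums over finite subsets of `(0,t]` are bounded by the variation on `[0,t]`. -/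
lemma jump_finset_sum_le (V Vm : ℝ → ℝ) (t : ℝ)
    (hV_ll : ∀ s ∈ Set.Ioi (0 : ℝ),
      Filter.Tendsto V (nhdsWithin s (Set.Iio s)) (nhds (Vm s)))
    (F : Finset ℝ) (hF : ∀ s ∈ F, s ∈ Set.Ioc 0 t) :
    ∑ s ∈ F, ENNReal.ofReal |V s - Vm s| ≤ eVariationOn V (Set.Icc 0 t) := by
  rcases le_or_gt t 0 with ht | ht
  · have : F = ∅ := by
      rcases Finset.eq_empty_or_nonempty F with h | ⟨s, hs⟩
      · exact h
      · exact absurd ((hF s hs).1.trans_le (hF s hs).2) (not_lt.mpr ht)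
    simp [this]
  · rcases eq_or_ne (eVariationOn V (Set.Icc 0 t)) ⊤ with htop | htop
    · simp [htop]
    refine ENNReal.le_of_forall_pos_le_add fun ε hε _ => ?_
    have h := jump_finset_sum_le_aux V Vm t hV_ll F.card F rfl hF
      ((ε : ℝ) / (F.card + 1)) (by positivity) t ⟨ht.le, le_refl t⟩ (fun s hs => (hF s hs).2)
    have h2 : (F.card : ℝ≥0∞) * ENNReal.ofReal ((ε:ℝ) / (F.card + 1)) ≤ (ε : ℝ≥0∞) := by
      have hc : (F.card : ℝ≥0∞) = ENNReal.ofReal (F.card : ℝ) := by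
        simp [ENNReal.ofReal_natCast]
      rw [hc, ← ENNReal.ofReal_mul (by positivity), ← ENNReal.ofReal_coe_nnreal]
      apply ENNReal.ofReal_le_ofReal
      rw [mul_comm, div_mul_eq_mul_div, div_le_iff₀ (by positivity)]
      nlinarith [ε.coe_nonneg]
    calc ∑ s ∈ F, ENNReal.ofReal |V s - Vm s|
        ≤ eVariationOn V (Set.Icc 0 t ∩ Set.Icc 0 t) + F.card * ENNReal.ofReal ((ε:ℝ)/(F.card+1)) := h
      _ ≤ eVariationOn V (Set.Icc 0 t) + ε :=
          add_le_add (eVariationOn.mono V Set.inter_subset_left) h2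

/-- tsum version over any subset of `(0,t]`. -/
lemma jump_tsum_le (V Vm : ℝ → ℝ) (t : ℝ)
    (hV_ll : ∀ s ∈ Set.Ioi (0 : ℝ),
      Filter.Tendsto V (nhdsWithin s (Set.Iio s)) (nhds (Vm s)))
    (A : Set ℝ) (hA : A ⊆ Set.Ioc 0 t) :
    ∑' s : A, ENNReal.ofReal |V s.1 - Vm s.1| ≤ eVariationOn V (Set.Icc 0 t) := by
  rw [ENNReal.tsum_eq_iSup_sum]
  refine iSup_le fun F => ?_
  have hinj : Function.Injective (fun s : A => (s : ℝ)) := Subtype.coe_injective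
  rw [← Finset.sum_image (f := fun s : ℝ => ENNReal.ofReal |V s - Vm s|)
    (g := fun s : A => (s : ℝ)) (by intro x _ y _ h; exact hinj h)]
  exact jump_finset_sum_le V Vm t hV_ll _ (by
    intro s hs
    simp only [Finset.mem_image] at hs
    obtain ⟨a, _, rfl⟩ := hs
    exact hA a.2)

/-- The set of jump times in `(0,t]` is countable. -/
lemma countable_jumpSet (V Vm : ℝ → ℝ) (t : ℝ)
    (hV_ll : ∀ s ∈ Set.Ioi (0 : ℝ),
      Filter.Tendsto V (nhdsWithin s (Set.Iio s)) (nhds (Vm s)))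
    (hV_bv : BoundedVariationOn V (Set.Icc 0 t)) :
    {s | s ∈ Set.Ioc 0 t ∧ Vm s ≠ V s}.Countable := by
  set A : Set ℝ := Set.Ioc 0 t
  have hts : ∑' s : A, ENNReal.ofReal |V s.1 - Vm s.1| ≠ ⊤ :=
    ne_top_of_le_ne_top hV_bv (jump_tsum_le V Vm t hV_ll A (le_refl _))
  have hsupp : {s : A | ENNReal.ofReal |V s.1 - Vm s.1| ≠ 0}.Countable := by
    have : {s : A | ENNReal.ofReal |V s.1 - Vm s.1| ≠ 0} ⊆
        ⋃ n : ℕ, {s : A | ((n:ℝ≥0∞)+1)⁻¹ ≤ ENNReal.ofReal |V s.1 - Vm s.1|} := by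
      intro s hs
      simp only [Set.mem_setOf_eq, ne_eq] at hs
      obtain ⟨n, hn⟩ := ENNReal.exists_inv_nat_lt hs
      simp only [Set.mem_iUnion, Set.mem_setOf_eq]
      refine ⟨n, le_trans ?_ hn.le⟩
      gcongr
      exact le_add_right (le_refl _)
    refine Set.Countable.mono this (Set.countable_iUnion fun n => Set.Finite.countable ?_)
    exact ENNReal.finite_const_le_of_tsum_ne_top hts (by simp)
  have : {s | s ∈ Set.Ioc 0 t ∧ Vm s ≠ V s}
      = (fun s : A => (s:ℝ)) '' {s : A | ENNReal.ofReal |V s.1 - Vm s.1| ≠ 0} := by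
    ext s
    simp only [Set.mem_setOf_eq, Set.mem_image]
    constructor
    · rintro ⟨hs, hne⟩
      refine ⟨⟨s, hs⟩, ?_, rfl⟩
      simp only [Set.mem_setOf_eq, ne_eq, ENNReal.ofReal_eq_zero, not_le, abs_pos]
      exact sub_ne_zero.mpr (fun h => hne h.symm)
    · rintro ⟨⟨s', hs'⟩, hne, rfl⟩
      refine ⟨hs', fun h => ?_⟩
      simp only [Set.mem_setOf_eq, ne_eq, ENNReal.ofReal_eq_zero, not_le, abs_pos,
        sub_ne_zero] at hne
      exact hne h.symm
  rw [this]
  exact Set.Countable.image hsupp _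

lemma summable_jump_sizes (V Vm : ℝ → ℝ) (t : ℝ)
    (hV_ll : ∀ s ∈ Set.Ioi (0 : ℝ),
      Filter.Tendsto V (nhdsWithin s (Set.Iio s)) (nhds (Vm s)))
    (hV_bv : BoundedVariationOn V (Set.Icc 0 t)) :
    Summable (fun s : Set.Ioc (0:ℝ) t => |V s.1 - Vm s.1|) := by
  have h1 : ∑' s : Set.Ioc (0:ℝ) t, ((Real.toNNReal |V s.1 - Vm s.1| : ℝ≥0) : ℝ≥0∞) ≠ ⊤ :=
    ne_top_of_le_ne_top hV_bv (jump_tsum_le V Vm t hV_ll (Set.Ioc 0 t) le_rfl)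
  have h2 := ENNReal.tsum_coe_ne_top_iff_summable.mp h1
  have h3 := NNReal.summable_coe.mpr h2
  refine h3.congr fun s => ?_
  simp [Real.coe_toNNReal _ (abs_nonneg _)]

lemma vm_bound (V Vm : ℝ → ℝ) (t : ℝ)
    (hV_ll : ∀ s ∈ Set.Ioi (0 : ℝ),
      Filter.Tendsto V (nhdsWithin s (Set.Iio s)) (nhds (Vm s)))
    (hV_bv : BoundedVariationOn V (Set.Icc 0 t))
    {s : ℝ} (hs : s ∈ Set.Ioc 0 t) :
    |Vm s - V 0| ≤ (eVariationOn V (Set.Icc 0 t)).toReal := by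
  have hll := hV_ll s hs.1
  haveI := nhdsLT_neBot s
  have hten : Filter.Tendsto (fun r => |V r - V 0|) (nhdsWithin s (Set.Iio s))
      (nhds (|Vm s - V 0|)) := ((hll.sub tendsto_const_nhds).abs)
  refine le_of_tendsto hten ?_
  filter_upwards [Ioo_mem_nhdsLT_of_mem (⟨hs.1, le_rfl⟩ : s ∈ Set.Ioc 0 s)] with r hr
  have := hV_bv.dist_le (x := r) (y := 0) ⟨hr.1.le, hr.2.le.trans hs.2⟩
    ⟨le_rfl, hs.1.le.trans hs.2⟩
  rwa [Real.dist_eq] at this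

lemma v_bound (V : ℝ → ℝ) (t : ℝ) (hV_bv : BoundedVariationOn V (Set.Icc 0 t))
    {s : ℝ} (hs : s ∈ Set.Icc 0 t) (h0 : 0 ≤ t) :
    |V s - V 0| ≤ (eVariationOn V (Set.Icc 0 t)).toReal := by
  have := hV_bv.dist_le (x := s) (y := 0) hs ⟨le_rfl, h0⟩
  rwa [Real.dist_eq] at this

/-- Intermediate value theorem for càdlàg functions: passing from above `x` to below `x`
must involve either hitting `x` or jumping from (weakly) above to (weakly) below. -/
lemma ivt_cadlag (V Vm : ℝ → ℝ)
    (hV_rc : ∀ s ∈ Set.Ici (0:ℝ), ContinuousWithinAt V (Set.Ici s) s)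
    (hV_ll : ∀ s ∈ Set.Ioi (0:ℝ),
      Filter.Tendsto V (nhdsWithin s (Set.Iio s)) (nhds (Vm s)))
    {x a b : ℝ} (ha : 0 ≤ a) (hab : a ≤ b) (hxa : x < V a) (hxb : V b < x) :
    ∃ s, s ∈ Set.Ioc a b ∧ (V s = x ∨ (V s ≠ Vm s ∧ V s ≤ x ∧ x ≤ Vm s)) := by
  set T := {r | r ∈ Set.Icc a b ∧ V r < x} with hT
  have hbT : b ∈ T := ⟨⟨hab, le_rfl⟩, hxb⟩
  have hTne : T.Nonempty := ⟨b, hbT⟩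
  have hbdd : BddBelow T := ⟨a, fun r hr => hr.1.1⟩
  set u := sInf T with hu
  have hau : a ≤ u := le_csInf hTne (fun r hr => hr.1.1)
  have hub : u ≤ b := csInf_le hbdd hbT
  have hu0 : 0 ≤ u := ha.trans hau
  have hVu : V u ≤ x := by
    by_contra hlt
    push_neg at hlt
    have hev : ∀ᶠ r in nhdsWithin u (Set.Ici u), x < V r :=
      hV_rc u hu0 (Ioi_mem_nhds hlt)
    obtain ⟨u', hu', hsub⟩ := mem_nhdsGE_iff_exists_Ico_subset.mp hev
    obtain ⟨r, hrT, hrlt⟩ := (csInf_lt_iff hbdd hTne).mp hu'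
    have hur : u ≤ r := csInf_le hbdd hrT
    have : x < V r := hsub ⟨hur, hrlt⟩
    exact absurd hrT.2 (not_lt.mpr this.le)
  have hua : u ≠ a := fun h => absurd (h ▸ hVu) (not_le.mpr hxa)
  have hauIoc : u ∈ Set.Ioc a b := ⟨lt_of_le_of_ne hau (Ne.symm hua), hub⟩
  rcases eq_or_lt_of_le hVu with heq | hVlt
  · exact ⟨u, hauIoc, Or.inl heq⟩
  · by_cases hall : ∀ r, a ≤ r → r < u → x < V r
    · have hu0' : u ∈ Set.Ioi (0:ℝ) := lt_of_le_of_lt ha hauIoc.1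
      have hll := hV_ll u hu0'
      have hev : ∀ᶠ r in nhdsWithin u (Set.Iio u), x ≤ V r := by
        filter_upwards [Ioo_mem_nhdsLT_of_mem (⟨hauIoc.1, le_rfl⟩ : u ∈ Set.Ioc a u)] with r hr
        exact (hall r hr.1.le hr.2).le
      haveI := nhdsLT_neBot u
      have hVm : x ≤ Vm u := ge_of_tendsto hll hev
      exact ⟨u, hauIoc, Or.inr ⟨ne_of_lt (lt_of_lt_of_le hVlt hVm), hVlt.le, hVm⟩⟩
    · push_neg at hall
      obtain ⟨r, har, hru, hVr⟩ := hall
      rcases eq_or_lt_of_le hVr with heq | hlt'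
      · refine ⟨r, ⟨lt_of_le_of_ne har fun h => ?_, (hru.le.trans hub)⟩, Or.inl heq⟩
        rw [h] at hxa
        exact absurd heq (ne_of_gt hxa)
      · exact absurd (csInf_le hbdd ⟨⟨har, hru.le.trans hub⟩, hlt'⟩) (not_le.mpr hru)

/-- Mirror version of the IVT. -/
lemma ivt_cadlag' (V Vm : ℝ → ℝ)
    (hV_rc : ∀ s ∈ Set.Ici (0:ℝ), ContinuousWithinAt V (Set.Ici s) s)
    (hV_ll : ∀ s ∈ Set.Ioi (0:ℝ),
      Filter.Tendsto V (nhdsWithin s (Set.Iio s)) (nhds (Vm s)))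
    {x a b : ℝ} (ha : 0 ≤ a) (hab : a ≤ b) (hxa : V a < x) (hxb : x < V b) :
    ∃ s, s ∈ Set.Ioc a b ∧ (V s = x ∨ (V s ≠ Vm s ∧ Vm s ≤ x ∧ x ≤ V s)) := by
  have hrc' : ∀ s ∈ Set.Ici (0:ℝ), ContinuousWithinAt (fun r => -V r) (Set.Ici s) s :=
    fun s hs => (hV_rc s hs).neg
  have hll' : ∀ s ∈ Set.Ioi (0:ℝ),
      Filter.Tendsto (fun r => -V r) (nhdsWithin s (Set.Iio s)) (nhds (-Vm s)) :=
    fun s hs => (hV_ll s hs).neg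
  obtain ⟨s, hs, h⟩ := ivt_cadlag (fun r => -V r) (fun r => -Vm r) hrc' hll'
    (x := -x) ha hab (neg_lt_neg hxa) (neg_lt_neg hxb)
  refine ⟨s, hs, ?_⟩
  rcases h with h | ⟨hne, h1, h2⟩
  · exact Or.inl (by linarith [neg_injective h])
  · exact Or.inr ⟨fun hh => hne (by rw [hh]), by linarith, by linarith⟩

/-- A.e. level sets of a BV function on `[0,t]` are finite (Banach indicatrix bound). -/
lemma ae_finite_level (V : ℝ → ℝ) (t : ℝ) (ht : 0 < t)
    (hV_bv : BoundedVariationOn V (Set.Icc 0 t)) :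
    ∀ᵐ x : ℝ ∂volume, {s | s ∈ Set.Icc 0 t ∧ V s = x}.Finite := by
  classical
  set P : ℕ → ℕ → ℝ := fun n k => t * k / 2 ^ n with hP
  have hPmono : ∀ n, Monotone (P n) := by
    intro n k k' hk
    simp only [hP]
    gcongr
  have hPmem : ∀ n k, k ≤ 2 ^ n → P n k ∈ Set.Icc 0 t := by
    intro n k hk
    constructor
    · positivity
    · rw [hP]
      rw [div_le_iff₀ (by positivity)]
      have : (k : ℝ) ≤ 2 ^ n := by exact_mod_cast hk
      nlinarith
  have hP0 : ∀ n, P n 0 = 0 := by intro n; simp [hP]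
  have hPlast : ∀ n, P n (2 ^ n) = t := by
    intro n
    have h2 : ((2:ℝ)^n) ≠ 0 := by positivity
    simp only [hP]
    push_cast
    exact mul_div_cancel_right₀ t h2
  have hPstep : ∀ n k, P n (k + 1) - P n k = t / 2 ^ n := by
    intro n k
    have h2 : ((2:ℝ)^n) ≠ 0 := by positivity
    simp only [hP]
    push_cast
    rw [div_sub_div_same]
    congr 1
    ring
  set v : ℕ → ℕ → ℝ≥0∞ := fun n k =>
    eVariationOn V (Set.Icc 0 t ∩ Set.Icc (P n k) (P n (k + 1))) with hv
  have hvle : ∀ n k, v n k ≤ eVariationOn V (Set.Icc 0 t) :=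
    fun n k => eVariationOn.mono V Set.inter_subset_left
  have hvne : ∀ n k, v n k ≠ ⊤ := fun n k => ne_top_of_le_ne_top hV_bv (hvle n k)
  set M : ℕ → ℝ → ℝ≥0∞ := fun n x => ∑ k ∈ Finset.range (2 ^ n),
    (Set.Icc (V (P n k) - (v n k).toReal) (V (P n k) + (v n k).toReal)).indicator
      (fun _ => (1:ℝ≥0∞)) x with hM
  have hMmeas : ∀ n, Measurable (M n) := by
    intro n
    apply Finset.measurable_sum
    intro k _
    exact measurable_const.indicator measurableSet_Icc
  -- telescoping sums of variations
  have htel : ∀ n, ∀ K ≤ 2 ^ n, ∑ k ∈ Finset.range K, v n k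
      = eVariationOn V (Set.Icc 0 t ∩ Set.Icc 0 (P n K)) := by
    intro n K
    induction K with
    | zero =>
      intro _
      rw [Finset.sum_range_zero, hP0]
      refine (eVariationOn.subsingleton V ?_).symm
      intro a ha b hb
      have : a ∈ Set.Icc (0:ℝ) 0 := ha.2
      have hb' : b ∈ Set.Icc (0:ℝ) 0 := hb.2
      simp only [Set.Icc_self, Set.mem_singleton_iff] at this hb'
      rw [this, hb']
    | succ K IH =>
      intro hK
      rw [Finset.sum_range_succ, IH (by omega)]
      exact eVariationOn.Icc_add_Icc V (hPmem n K (by omega)).1 (hPmono n (by omega))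
        (hPmem n K (by omega))
  have hlint : ∀ n, ∫⁻ x, M n x ≤ 2 * eVariationOn V (Set.Icc 0 t) := by
    intro n
    rw [hM]
    simp only
    rw [lintegral_finset_sum _ (fun k _ => measurable_const.indicator measurableSet_Icc)]
    have hterm : ∀ k ∈ Finset.range (2 ^ n),
        ∫⁻ x, (Set.Icc (V (P n k) - (v n k).toReal) (V (P n k) + (v n k).toReal)).indicator
          (fun _ => (1:ℝ≥0∞)) x = 2 * v n k := by
      intro k _
      rw [lintegral_indicator measurableSet_Icc]
      simp only [MeasureTheory.setLIntegral_const, one_mul]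
      rw [Real.volume_Icc]
      have : V (P n k) + (v n k).toReal - (V (P n k) - (v n k).toReal)
          = 2 * (v n k).toReal := by ring
      rw [this, ENNReal.ofReal_mul (by norm_num), ENNReal.ofReal_toReal (hvne n k)]
      norm_num
    rw [Finset.sum_congr rfl hterm, ← Finset.mul_sum]
    gcongr
    rw [htel n (2 ^ n) le_rfl, hPlast]
    exact eVariationOn.mono V Set.inter_subset_left
  -- Fatou
  have hlim2 : ∫⁻ x, Filter.liminf (fun n => M n x) Filter.atTop
      ≤ 2 * eVariationOn V (Set.Icc 0 t) := by
    refine le_trans (lintegral_liminf_le (fun n => hMmeas n)) ?_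
    refine le_trans (Filter.liminf_le_liminf (Filter.Eventually.of_forall hlint)) ?_
    simp [Filter.liminf_const]
  have hfin : ∀ᵐ x : ℝ ∂volume, Filter.liminf (fun n => M n x) Filter.atTop < ⊤ := by
    apply ae_lt_top
    · apply Measurable.liminf (fun n => hMmeas n)
    · exact ne_top_of_le_ne_top (by
        exact ENNReal.mul_ne_top (by norm_num) hV_bv) hlim2
  filter_upwards [hfin] with x hx
  by_contra hinf
  -- derive liminf = ⊤
  obtain ⟨m, hm⟩ := ENNReal.exists_nat_gt hx.ne
  -- find m points of the level set below t
  have hinf' : ({s | s ∈ Set.Icc 0 t ∧ V s = x} \ {t}).Infinite :=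
    Set.Infinite.diff hinf (Set.finite_singleton t)
  obtain ⟨F, hFsub, hFcard⟩ := hinf'.exists_subset_card_eq m
  set kmap : ℕ → ℝ → ℕ := fun n s => ⌊s * 2 ^ n / t⌋.toNat with hkmap
  have hFmem : ∀ s ∈ F, s ∈ Set.Icc 0 t ∧ V s = x ∧ s < t := by
    intro s hs
    have := hFsub hs
    exact ⟨this.1.1, this.1.2, lt_of_le_of_ne this.1.1.2 (by simpa using this.2)⟩
  -- basic properties of kmap
  have hkm : ∀ n, ∀ s ∈ F, kmap n s < 2 ^ n ∧ P n (kmap n s) ≤ s ∧ s < P n (kmap n s + 1) := by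
    intro n s hs
    obtain ⟨⟨hs0, _⟩, _, hst⟩ := hFmem s hs
    have hq0 : (0:ℝ) ≤ s * 2 ^ n / t := by positivity
    have hfl : (kmap n s : ℝ) = ⌊s * 2 ^ n / t⌋ := by
      simp only [hkmap]
      exact_mod_cast Int.toNat_of_nonneg (Int.floor_nonneg.mpr hq0)
    have hfl_le : (kmap n s : ℝ) ≤ s * 2 ^ n / t := by
      rw [hfl]; exact Int.floor_le _
    have hfl_gt : s * 2 ^ n / t < (kmap n s : ℝ) + 1 := by
      rw [hfl]; exact Int.lt_floor_add_one _
    have h2pos : (0:ℝ) < 2 ^ n := by positivity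
    refine ⟨?_, ?_, ?_⟩
    · have hlt : s * 2 ^ n / t < 2 ^ n := by
        rw [div_lt_iff₀ ht]; nlinarith
      have h4 : (kmap n s : ℝ) < ((2 ^ n : ℕ) : ℝ) := by
        push_cast
        exact lt_of_le_of_lt hfl_le hlt
      exact_mod_cast h4
    · rw [hP]
      simp only
      rw [div_le_iff₀ h2pos]
      rw [le_div_iff₀ ht] at hfl_le
      nlinarith
    · rw [hP]
      simp only
      rw [lt_div_iff₀ h2pos]
      rw [div_lt_iff₀ ht] at hfl_gt
      push_cast
      nlinarith
  -- x belongs to the k-th covering interval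
  have hxmem : ∀ n, ∀ s ∈ F, x ∈ Set.Icc (V (P n (kmap n s)) - (v n (kmap n s)).toReal)
      (V (P n (kmap n s)) + (v n (kmap n s)).toReal) := by
    intro n s hs
    obtain ⟨hk2, hk3, hk4⟩ := hkm n s hs
    obtain ⟨hsIcc, hVs, _⟩ := hFmem s hs
    have hmem1 : s ∈ Set.Icc 0 t ∩ Set.Icc (P n (kmap n s)) (P n (kmap n s + 1)) :=
      ⟨hsIcc, hk3, hk4.le⟩
    have hmem2 : P n (kmap n s) ∈ Set.Icc 0 t ∩ Set.Icc (P n (kmap n s)) (P n (kmap n s + 1)) :=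
      ⟨hPmem n _ (by omega), le_rfl, hPmono n (by omega)⟩
    have hbv' : BoundedVariationOn V (Set.Icc 0 t ∩ Set.Icc (P n (kmap n s)) (P n (kmap n s + 1))) :=
      hV_bv.mono Set.inter_subset_left
    have := hbv'.dist_le hmem1 hmem2
    rw [Real.dist_eq, hVs] at this
    rw [abs_le] at this
    constructor <;> [linarith [this.1]; linarith [this.2]]
  -- eventual injectivity
  have hevinj : ∀ᶠ n in Filter.atTop, ∀ p ∈ (F ×ˢ F).filter (fun p => p.1 ≠ p.2),
      kmap n p.1 ≠ kmap n p.2 := by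
    rw [Filter.eventually_all_finset]
    rintro ⟨s, s'⟩ hp
    simp only [Finset.mem_filter, Finset.mem_product] at hp
    obtain ⟨⟨hsF, hs'F⟩, hne⟩ := hp
    have hgap : 0 < |s - s'| := abs_pos.mpr (sub_ne_zero.mpr hne)
    have hlim : Filter.Tendsto (fun n : ℕ => t / 2 ^ n) Filter.atTop (nhds 0) := by
      apply Filter.Tendsto.div_atTop tendsto_const_nhds
      exact tendsto_pow_atTop_atTop_of_one_lt (by norm_num)
    have hev := hlim.eventually (eventually_lt_nhds hgap) -- t/2^n < |s - s'| eventually? careful direction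
    filter_upwards [hev] with n hn heq
    obtain ⟨_, h1, h2⟩ := hkm n s hsF
    obtain ⟨_, h3, h4⟩ := hkm n s' hs'F
    rw [heq] at h1 h2
    have hstep := hPstep n (kmap n s')
    have : |s - s'| < t / 2 ^ n := by
      rw [abs_sub_lt_iff]
      constructor <;> linarith
    linarith
  -- conclude liminf ≥ m
  have hliminf : (m : ℝ≥0∞) ≤ Filter.liminf (fun n => M n x) Filter.atTop := by
    refine Filter.le_liminf_of_le (by isBoundedDefault) ?_
    filter_upwards [hevinj] with n hn
    have hinj : Set.InjOn (kmap n) F := by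
      intro s hs s' hs' h
      by_contra hne
      exact hn (s, s') (by
        simp only [Finset.mem_filter, Finset.mem_product]
        exact ⟨⟨Finset.mem_coe.mp hs, Finset.mem_coe.mp hs'⟩, hne⟩) h
    have himgsub : F.image (kmap n) ⊆ Finset.range (2 ^ n) := by
      intro k hk
      simp only [Finset.mem_image] at hk
      obtain ⟨s, hs, rfl⟩ := hk
      exact Finset.mem_range.mpr (hkm n s hs).1
    calc (m : ℝ≥0∞) = (F.image (kmap n)).card := by
          rw [Finset.card_image_of_injOn (by exact_mod_cast hinj), hFcard]
      _ = ∑ k ∈ F.image (kmap n), (1:ℝ≥0∞) := by simp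
      _ ≤ M n x := by
          rw [hM]
          simp only
          refine le_trans (le_of_eq ?_) (Finset.sum_le_sum_of_subset himgsub)
          apply Finset.sum_congr rfl
          intro k hk
          simp only [Finset.mem_image] at hk
          obtain ⟨s, hs, rfl⟩ := hk
          rw [Set.indicator_of_mem (hxmem n s hs)]
  exact absurd (lt_of_lt_of_le hm hliminf) (lt_irrefl _)

/-- A.e. `x` is strictly straddled by only finitely many jumps. -/
lemma ae_finite_straddle (V Vm : ℝ → ℝ) (t : ℝ)
    (hV_ll : ∀ s ∈ Set.Ioi (0 : ℝ),
      Filter.Tendsto V (nhdsWithin s (Set.Iio s)) (nhds (Vm s)))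
    (hV_bv : BoundedVariationOn V (Set.Icc 0 t)) :
    ∀ᵐ x : ℝ ∂volume,
      {s | s ∈ Set.Ioc 0 t ∧ (V s < x ∧ x < Vm s ∨ Vm s < x ∧ x < V s)}.Finite := by
  classical
  set J : Set ℝ := {s | s ∈ Set.Ioc 0 t ∧ Vm s ≠ V s} with hJ
  have hJc : J.Countable := countable_jumpSet V Vm t hV_ll hV_bv
  haveI := hJc.to_subtype
  set H : ℝ → ℝ≥0∞ := fun x => ∑' s : J,
    (Set.Ioo (min (V s.1) (Vm s.1)) (max (V s.1) (Vm s.1))).indicator (fun _ => (1:ℝ≥0∞)) x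
    with hH
  have hHmeas : Measurable H :=
    Measurable.ennreal_tsum (fun s => measurable_const.indicator measurableSet_Ioo)
  have hHint : ∫⁻ x, H x ≤ eVariationOn V (Set.Icc 0 t) := by
    rw [hH]
    simp only
    rw [lintegral_tsum (fun s => (measurable_const.indicator measurableSet_Ioo).aemeasurable)]
    have heach : ∀ s : J, ∫⁻ x, (Set.Ioo (min (V s.1) (Vm s.1))
        (max (V s.1) (Vm s.1))).indicator (fun _ => (1:ℝ≥0∞)) x
        = ENNReal.ofReal |V s.1 - Vm s.1| := by
      intro s
      rw [lintegral_indicator measurableSet_Ioo]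
      simp only [MeasureTheory.setLIntegral_const, one_mul]
      rw [Real.volume_Ioo, max_sub_min_eq_abs, abs_sub_comm]
    rw [tsum_congr heach]
    exact jump_tsum_le V Vm t hV_ll J (fun s hs => hs.1)
  have hae : ∀ᵐ x : ℝ ∂volume, H x < ⊤ :=
    ae_lt_top hHmeas (ne_top_of_le_ne_top hV_bv hHint)
  filter_upwards [hae] with x hx
  by_contra hinf
  obtain ⟨m, hm⟩ := ENNReal.exists_nat_gt hx.ne
  have hsub : {s | s ∈ Set.Ioc 0 t ∧ (V s < x ∧ x < Vm s ∨ Vm s < x ∧ x < V s)} ⊆ J := by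
    rintro s ⟨hs, h | h⟩
    · exact ⟨hs, fun hh => absurd (hh ▸ h.2) (not_lt.mpr h.1.le)⟩
    · exact ⟨hs, ne_of_lt (lt_trans h.1 h.2)⟩
  have hinf2 : {σ : J | V σ.1 < x ∧ x < Vm σ.1 ∨ Vm σ.1 < x ∧ x < V σ.1}.Infinite := by
    intro hfin
    apply hinf
    have : {s | s ∈ Set.Ioc 0 t ∧ (V s < x ∧ x < Vm s ∨ Vm s < x ∧ x < V s)}
        ⊆ (fun σ : J => σ.1) '' {σ : J | V σ.1 < x ∧ x < Vm σ.1 ∨ Vm σ.1 < x ∧ x < V σ.1} := by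
      intro s hs
      exact ⟨⟨s, hsub hs⟩, hs.2, rfl⟩
    exact Set.Finite.subset (hfin.image _) this
  obtain ⟨F, hFsub, hFcard⟩ := hinf2.exists_subset_card_eq m
  have : (m : ℝ≥0∞) ≤ H x := by
    calc (m : ℝ≥0∞) = ∑ σ ∈ F, (1:ℝ≥0∞) := by rw [Finset.sum_const, hFcard]; simp
      _ = ∑ σ ∈ F, (Set.Ioo (min (V σ.1) (Vm σ.1))
          (max (V σ.1) (Vm σ.1))).indicator (fun _ => (1:ℝ≥0∞)) x := by
          apply Finset.sum_congr rfl
          intro σ hσ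
          have hmem := hFsub hσ
          rw [Set.indicator_of_mem]
          rcases hmem with h | h
          · exact ⟨lt_of_le_of_lt (min_le_left _ _) h.1, lt_of_lt_of_le h.2 (le_max_right _ _)⟩
          · exact ⟨lt_of_le_of_lt (min_le_right _ _) h.1, lt_of_lt_of_le h.2 (le_max_left _ _)⟩
      _ ≤ H x := ENNReal.sum_le_tsum F
  exact absurd (lt_of_lt_of_le hm this) (lt_irrefl _)

/-- The set of values of `V` at local maxima (within `Ici 0`) is countable. -/
lemma countable_localmax (V : ℝ → ℝ) (t : ℝ) :
    Set.Countable {x | ∃ s, s ∈ Set.Ioc 0 t ∧ V s = x ∧ ∃ p q : ℝ, p < s ∧ s < q ∧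
      ∀ r ∈ Set.Ici (0:ℝ), p < r → r < q → V r ≤ V s} := by
  have hsub : {x | ∃ s, s ∈ Set.Ioc 0 t ∧ V s = x ∧ ∃ p q : ℝ, p < s ∧ s < q ∧
      ∀ r ∈ Set.Ici (0:ℝ), p < r → r < q → V r ≤ V s}
      ⊆ ⋃ (p : ℚ) (q : ℚ), {x | ∃ s, s ∈ Set.Ioc 0 t ∧ V s = x ∧ (p:ℝ) < s ∧ s < (q:ℝ) ∧
      ∀ r ∈ Set.Ici (0:ℝ), (p:ℝ) < r → r < (q:ℝ) → V r ≤ V s} := by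
    rintro x ⟨s, hs, hVs, p, q, hps, hsq, hall⟩
    obtain ⟨p', hp'1, hp'2⟩ := exists_rat_btwn hps
    obtain ⟨q', hq'1, hq'2⟩ := exists_rat_btwn hsq
    simp only [Set.mem_iUnion]
    exact ⟨p', q', s, hs, hVs, hp'2, hq'1, fun r hr h1 h2 =>
      hall r hr (lt_trans hp'1 h1) (lt_trans h2 hq'2)⟩
  refine Set.Countable.mono hsub (Set.countable_iUnion fun p => Set.countable_iUnion fun q =>
    Set.Subsingleton.countable ?_)
  rintro x ⟨s, hs, rfl, hps, hsq, hall⟩ y ⟨s', hs', rfl, hps', hsq', hall'⟩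
  exact le_antisymm (hall' s hs.1.le hps hsq) (hall s' hs'.1.le hps' hsq')

/-- The set of values of `V` at local minima is countable. -/
lemma countable_localmin (V : ℝ → ℝ) (t : ℝ) :
    Set.Countable {x | ∃ s, s ∈ Set.Ioc 0 t ∧ V s = x ∧ ∃ p q : ℝ, p < s ∧ s < q ∧
      ∀ r ∈ Set.Ici (0:ℝ), p < r → r < q → V s ≤ V r} := by
  have h := (countable_localmax (fun r => -V r) t).image (fun y => -y)
  refine Set.Countable.mono ?_ h
  rintro x ⟨s, hs, hVs, p, q, hps, hsq, hall⟩
  refine ⟨-x, ⟨s, hs, by rw [← hVs], p, q, hps, hsq, fun r hr h1 h2 => ?_⟩, by ring⟩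
  simp only [neg_le_neg_iff]
  exact hall r hr h1 h2

/-- The exceptional time set: level points and strictly straddling jumps. -/
def Sset (V Vm : ℝ → ℝ) (x t : ℝ) : Set ℝ :=
  {s | s ∈ Set.Ioc 0 t ∧ (V s = x ∨ (V s < x ∧ x < Vm s) ∨ (Vm s < x ∧ x < V s))}

lemma sign_dichotomy (V Vm : ℝ → ℝ) (t x : ℝ)
    (hV_rc : ∀ s ∈ Set.Ici (0:ℝ), ContinuousWithinAt V (Set.Ici s) s)
    (hV_ll : ∀ s ∈ Set.Ioi (0:ℝ),
      Filter.Tendsto V (nhdsWithin s (Set.Iio s)) (nhds (Vm s)))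
    (hjump : ∀ s, s ∈ Set.Ioc 0 t → Vm s ≠ V s → V s ≠ x ∧ Vm s ≠ x)
    {a b : ℝ} (ha : 0 ≤ a) (hab : a ≤ b) (hbt : b ≤ t)
    (hS : ∀ s, s ∈ Set.Ioc a b → s ∉ Sset V Vm x t) (hVa : V a ≠ x) :
    V b ≠ x ∧ (x < V b ↔ x < V a) := by
  rcases eq_or_lt_of_le hab with rfl | hlt
  · exact ⟨hVa, Iff.rfl⟩
  have hVb : V b ≠ x := fun h =>
    hS b ⟨hlt, le_rfl⟩ ⟨⟨lt_of_le_of_lt ha hlt, hbt⟩, Or.inl h⟩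
  refine ⟨hVb, ?_⟩
  constructor
  · intro hxb
    by_contra hxa
    have hxa' : V a < x := lt_of_le_of_ne (not_lt.mp hxa) hVa
    obtain ⟨s, hsIoc, hcase⟩ := ivt_cadlag' V Vm hV_rc hV_ll ha hab hxa' hxb
    have hs0t : s ∈ Set.Ioc 0 t := ⟨lt_of_le_of_lt ha hsIoc.1, hsIoc.2.trans hbt⟩
    rcases hcase with h | ⟨hne, h1, h2⟩
    · exact hS s hsIoc ⟨hs0t, Or.inl h⟩
    · have hj := hjump s hs0t (fun hh => hne hh.symm)
      exact hS s hsIoc ⟨hs0t, Or.inr (Or.inr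
        ⟨lt_of_le_of_ne h1 hj.2, lt_of_le_of_ne h2 (Ne.symm hj.1)⟩)⟩
  · intro hxa
    by_contra hxb
    have hxb' : V b < x := lt_of_le_of_ne (not_lt.mp hxb) hVb
    obtain ⟨s, hsIoc, hcase⟩ := ivt_cadlag V Vm hV_rc hV_ll ha hab hxa hxb'
    have hs0t : s ∈ Set.Ioc 0 t := ⟨lt_of_le_of_lt ha hsIoc.1, hsIoc.2.trans hbt⟩
    rcases hcase with h | ⟨hne, h1, h2⟩
    · exact hS s hsIoc ⟨hs0t, Or.inl h⟩
    · have hj := hjump s hs0t (fun hh => hne hh.symm)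
      exact hS s hsIoc ⟨hs0t, Or.inr (Or.inl
        ⟨lt_of_le_of_ne h1 hj.1, lt_of_le_of_ne h2 (Ne.symm hj.2)⟩)⟩

lemma leftlim_sign (V Vm : ℝ → ℝ) (t x : ℝ)
    (hV_rc : ∀ s ∈ Set.Ici (0:ℝ), ContinuousWithinAt V (Set.Ici s) s)
    (hV_ll : ∀ s ∈ Set.Ioi (0:ℝ),
      Filter.Tendsto V (nhdsWithin s (Set.Iio s)) (nhds (Vm s)))
    (hjump : ∀ s, s ∈ Set.Ioc 0 t → Vm s ≠ V s → V s ≠ x ∧ Vm s ≠ x)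
    {a b : ℝ} (ha : 0 ≤ a) (hab : a < b) (hbt : b ≤ t)
    (hS : ∀ s, s ∈ Set.Ioo a b → s ∉ Sset V Vm x t) (hVa : V a ≠ x) :
    (x < V a → x ≤ Vm b) ∧ (V a < x → Vm b ≤ x) := by
  have hb0 : 0 < b := lt_of_le_of_lt ha hab
  have hll := hV_ll b hb0
  haveI := nhdsLT_neBot b
  have hsign : ∀ r ∈ Set.Ioo a b, (x < V r ↔ x < V a) := by
    intro r hr
    exact (sign_dichotomy V Vm t x hV_rc hV_ll hjump ha hr.1.le (hr.2.le.trans hbt)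
      (fun s hs => hS s ⟨hs.1, lt_of_le_of_lt hs.2 hr.2⟩) hVa).2
  constructor
  · intro hxa
    refine ge_of_tendsto hll ?_
    filter_upwards [Ioo_mem_nhdsLT_of_mem (⟨hab, le_rfl⟩ : b ∈ Set.Ioc a b)] with r hr
    exact ((hsign r hr).2 hxa).le
  · intro hxa
    refine le_of_tendsto hll ?_
    filter_upwards [Ioo_mem_nhdsLT_of_mem (⟨hab, le_rfl⟩ : b ∈ Set.Ioc a b)] with r hr
    have : ¬ x < V r := fun h => absurd ((hsign r hr).1 h) (not_lt.mpr hxa.le)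
    exact not_lt.mp this

lemma not_inc_and_dec (V : ℝ → ℝ) (x s : ℝ) :
    IncreasesThrough V x s → DecreasesThrough V x s → False := by
  rintro ⟨hs0, _, _, ε₁, hε₁, h₁⟩ ⟨_, _, _, ε₂, hε₂, h₂⟩
  set r := max (s / 2) (s - min ε₁ ε₂ / 2) with hr
  have hrs : r < s := by
    rw [hr]
    apply max_lt (by linarith) (by

      have : 0 < min ε₁ ε₂ := lt_min hε₁ hε₂
      linarith)
  have hr0 : 0 ≤ r := le_trans (by linarith) (le_max_left _ _)
  have hrabs : |r - s| < min ε₁ ε₂ := by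
    rw [abs_sub_lt_iff]
    have h1 : s - min ε₁ ε₂ / 2 ≤ r := le_max_right _ _
    have : 0 < min ε₁ ε₂ := lt_min hε₁ hε₂
    constructor <;> linarith
  have hlt1 := (h₁ r hr0 (lt_of_lt_of_le hrabs (min_le_left _ _))).1 hrs
  have hlt2 := (h₂ r hr0 (lt_of_lt_of_le hrabs (min_le_right _ _))).1 hrs
  simp only at hlt2
  linarith

lemma crossing_count (V Vm : ℝ → ℝ) (t : ℝ) (ht : 0 < t) (x : ℝ)
    (hV_rc : ∀ s ∈ Set.Ici (0:ℝ), ContinuousWithinAt V (Set.Ici s) s)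
    (hV_ll : ∀ s ∈ Set.Ioi (0:ℝ),
      Filter.Tendsto V (nhdsWithin s (Set.Iio s)) (nhds (Vm s)))
    (hTt : V t ≠ x)
    (hjump : ∀ s, s ∈ Set.Ioc 0 t → Vm s ≠ V s → V s ≠ x ∧ Vm s ≠ x)
    (hSfin : (Sset V Vm x t).Finite)
    (hnomax : ¬ ∃ s, s ∈ Set.Ioc 0 t ∧ V s = x ∧ ∃ p q : ℝ, p < s ∧ s < q ∧
      ∀ r ∈ Set.Ici (0:ℝ), p < r → r < q → V r ≤ V s)
    (hnomin : ¬ ∃ s, s ∈ Set.Ioc 0 t ∧ V s = x ∧ ∃ p q : ℝ, p < s ∧ s < q ∧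
      ∀ r ∈ Set.Ici (0:ℝ), p < r → r < q → V s ≤ V r) :
    ∀ n : ℕ, ∀ a : ℝ, 0 ≤ a → a ≤ t → V a ≠ x →
      (Sset V Vm x t ∩ Set.Ioc a t).ncard = n →
      ((if x < V t then (1:ℝ) else 0) - (if x < V a then 1 else 0)) =
        ({s | s ∈ Set.Ioc a t ∧ IncreasesThrough V x s}.ncard : ℝ)
        - ({s | s ∈ Set.Ioc a t ∧ DecreasesThrough V x s}.ncard : ℝ)
        + ∑ s ∈ hSfin.toFinset.filter (· ∈ Set.Ioc a t),
            ((if x < V s then (1:ℝ) else 0) - (if x < Vm s then 1 else 0)) := by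
  classical
  intro n
  induction n using Nat.strong_induction_on with
  | _ n IH =>
  intro a ha hat hVa hcard
  have hincsub : ∀ a', 0 ≤ a' → {s | s ∈ Set.Ioc a' t ∧ IncreasesThrough V x s}
      ⊆ Sset V Vm x t ∩ Set.Ioc a' t := by
    rintro a' ha' s ⟨hs, hInc⟩
    exact ⟨⟨⟨lt_of_le_of_lt ha' hs.1, hs.2⟩, Or.inl hInc.2.1⟩, hs⟩
  have hdecValue : ∀ s : ℝ, DecreasesThrough V x s → V s = x := by
    intro s hD
    have := hD.2.1
    simp only at this
    linarith
  have hdecsub : ∀ a', 0 ≤ a' → {s | s ∈ Set.Ioc a' t ∧ DecreasesThrough V x s}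
      ⊆ Sset V Vm x t ∩ Set.Ioc a' t := by
    rintro a' ha' s ⟨hs, hDec⟩
    exact ⟨⟨⟨lt_of_le_of_lt ha' hs.1, hs.2⟩, Or.inl (hdecValue s hDec)⟩, hs⟩
  have hSfinInt : ∀ a', (Sset V Vm x t ∩ Set.Ioc a' t).Finite :=
    fun a' => hSfin.inter_of_left _
  rcases Set.eq_empty_or_nonempty (Sset V Vm x t ∩ Set.Ioc a t) with hemp | hne
  · have hinc0 : {s | s ∈ Set.Ioc a t ∧ IncreasesThrough V x s} = ∅ :=
      Set.eq_empty_of_subset_empty (hemp ▸ hincsub a ha)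
    have hdec0 : {s | s ∈ Set.Ioc a t ∧ DecreasesThrough V x s} = ∅ :=
      Set.eq_empty_of_subset_empty (hemp ▸ hdecsub a ha)
    have hfil : hSfin.toFinset.filter (· ∈ Set.Ioc a t) = ∅ := by
      rw [Finset.filter_eq_empty_iff]
      intro s hsT hsIoc
      rw [Set.Finite.mem_toFinset] at hsT
      exact Set.eq_empty_iff_forall_notMem.mp hemp s ⟨hsT, hsIoc⟩
    have hiff := (sign_dichotomy V Vm t x hV_rc hV_ll hjump ha hat le_rfl
      (fun s hs hmem => Set.eq_empty_iff_forall_notMem.mp hemp s ⟨hmem, hs⟩) hVa).2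
    rw [hinc0, hdec0, hfil, if_congr hiff rfl rfl]
    simp
  · set T := hSfin.toFinset with hT
    have hQne : (T.filter (· ∈ Set.Ioc a t)).Nonempty := by
      obtain ⟨s, hs1, hs2⟩ := hne
      exact ⟨s, Finset.mem_filter.mpr ⟨hSfin.mem_toFinset.mpr hs1, hs2⟩⟩
    set s₁ := (T.filter (· ∈ Set.Ioc a t)).min' hQne with hs₁def
    have hs₁mem : s₁ ∈ Sset V Vm x t ∧ s₁ ∈ Set.Ioc a t := by
      have := (T.filter (· ∈ Set.Ioc a t)).min'_mem hQne
      rw [Finset.mem_filter, hSfin.mem_toFinset] at this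
      exact this
    have hmin : ∀ s, s ∈ Sset V Vm x t → a < s → s₁ ≤ s := by
      intro s hs has
      exact Finset.min'_le _ s (Finset.mem_filter.mpr
        ⟨hSfin.mem_toFinset.mpr hs, has, hs.1.2⟩)
    have hs₁0 : 0 < s₁ := hs₁mem.1.1.1
    have hs₁t : s₁ ≤ t := hs₁mem.1.1.2
    have has₁ : a < s₁ := hs₁mem.2.1
    have hfree : ∀ s, a < s → s < s₁ → s ∉ Sset V Vm x t :=
      fun s h1 h2 hmem => absurd (hmin s hmem h1) (not_le.mpr h2)
    rcases hs₁mem.1.2 with hVs₁ | hstr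
    · -- CROSS case : V s₁ = x
      have hnj : Vm s₁ = V s₁ := by
        by_contra hne'
        exact (hjump s₁ hs₁mem.1.1 hne').1 hVs₁
      have hs₁lt : s₁ < t := lt_of_le_of_ne hs₁t (fun h => hTt (h ▸ hVs₁))
      obtain ⟨b', hb'1, hb'2, hb'free⟩ :
          ∃ b', s₁ < b' ∧ b' ≤ t ∧ ∀ s ∈ Sset V Vm x t, ¬(s₁ < s ∧ s ≤ b') := by
        rcases Set.eq_empty_or_nonempty (Sset V Vm x t ∩ Set.Ioc s₁ t) with h2 | h2
        · exact ⟨t, hs₁lt, le_rfl, fun s hs hc =>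
            Set.eq_empty_iff_forall_notMem.mp h2 s ⟨hs, hc.1, hs.1.2⟩⟩
        · have hQ'ne : (T.filter (· ∈ Set.Ioc s₁ t)).Nonempty := by
            obtain ⟨s, hsa, hsb⟩ := h2
            exact ⟨s, Finset.mem_filter.mpr ⟨hSfin.mem_toFinset.mpr hsa, hsb⟩⟩
          set s₂ := (T.filter (· ∈ Set.Ioc s₁ t)).min' hQ'ne with hs₂def
          have hs₂mem : s₂ ∈ Sset V Vm x t ∧ s₂ ∈ Set.Ioc s₁ t := by
            have := (T.filter (· ∈ Set.Ioc s₁ t)).min'_mem hQ'ne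
            rw [Finset.mem_filter, hSfin.mem_toFinset] at this
            exact this
          refine ⟨(s₁ + s₂)/2, by linarith [hs₂mem.2.1], by linarith [hs₂mem.2.2], ?_⟩
          rintro s hs ⟨h1, h2'⟩
          have : s₂ ≤ s := Finset.min'_le _ s (Finset.mem_filter.mpr
            ⟨hSfin.mem_toFinset.mpr hs, h1, hs.1.2⟩)
          linarith
      have hb'0 : 0 ≤ b' := by linarith
      have hVb' : V b' ≠ x := fun h =>
        hb'free b' ⟨⟨lt_trans hs₁0 hb'1, hb'2⟩, Or.inl h⟩ ⟨hb'1, le_rfl⟩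
      have hsignL : ∀ r, a < r → r < s₁ → (V r ≠ x ∧ (x < V r ↔ x < V a)) := by
        intro r h1 h2
        exact sign_dichotomy V Vm t x hV_rc hV_ll hjump ha h1.le (h2.le.trans hs₁t)
          (fun s hs hmem => hfree s hs.1 (lt_of_le_of_lt hs.2 h2) hmem) hVa
      have hsignR : ∀ r, s₁ < r → r < b' → (V r ≠ x ∧ (x < V b' ↔ x < V r)) := by
        intro r h1 h2
        have hVr : V r ≠ x := fun h =>
          hb'free r ⟨⟨lt_trans hs₁0 h1, (h2.le).trans hb'2⟩, Or.inl h⟩ ⟨h1, h2.le⟩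
        exact ⟨hVr, (sign_dichotomy V Vm t x hV_rc hV_ll hjump
          (by linarith) h2.le hb'2
          (fun s hs hmem => hb'free s hmem ⟨lt_trans h1 hs.1, hs.2⟩) hVr).2⟩
      have hcont : ContinuousWithinAt V (Set.Ici 0) s₁ := by
        have hIio : ContinuousWithinAt V (Set.Iio s₁) s₁ := by
          show Filter.Tendsto V (nhdsWithin s₁ (Set.Iio s₁)) (nhds (V s₁))
          rw [← hnj]
          exact hV_ll s₁ hs₁0
        have hIci : ContinuousWithinAt V (Set.Ici s₁) s₁ := hV_rc s₁ hs₁0.le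
        refine (hIio.union hIci).mono ?_
        intro r _
        rcases lt_or_ge r s₁ with h | h
        exacts [Or.inl h, Or.inr h]
      -- common pieces for the two sign cases
      have hQsplitGen : T.filter (· ∈ Set.Ioc a t) = insert s₁ (T.filter (· ∈ Set.Ioc b' t)) := by
        ext s
        simp only [Finset.mem_filter, Finset.mem_insert, hSfin.mem_toFinset, hT]
        constructor
        · rintro ⟨hsS, hsIoc⟩
          by_cases hss : s = s₁
          · exact Or.inl hss
          · have h1' : s₁ < s := lt_of_le_of_ne (hmin s hsS hsIoc.1) (Ne.symm hss)
            have h2' : ¬ s ≤ b' := fun hle => hb'free s hsS ⟨h1', hle⟩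
            exact Or.inr ⟨hsS, not_le.mp h2', hsIoc.2⟩
        · rintro (rfl | ⟨hsS, hsIoc⟩)
          · exact ⟨hs₁mem.1, hs₁mem.2⟩
          · exact ⟨hsS, by linarith [hsIoc.1], hsIoc.2⟩
      have hs₁notin : s₁ ∉ T.filter (· ∈ Set.Ioc b' t) := by
        simp only [Finset.mem_filter]
        rintro ⟨-, h1, -⟩
        linarith
      have hSdrop : Sset V Vm x t ∩ Set.Ioc b' t = (Sset V Vm x t ∩ Set.Ioc a t) \ {s₁} := by
        ext s
        constructor
        · rintro ⟨hsS, hsIoc⟩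
          refine ⟨⟨hsS, by linarith [hsIoc.1], hsIoc.2⟩, ?_⟩
          intro h
          rw [Set.mem_singleton_iff] at h
          rw [h] at hsIoc
          linarith [hsIoc.1]
        · rintro ⟨⟨hsS, hsIoc⟩, hne'⟩
          rw [Set.mem_singleton_iff] at hne'
          have h1' : s₁ < s := lt_of_le_of_ne (hmin s hsS hsIoc.1) (Ne.symm hne')
          exact ⟨hsS, not_le.mp (fun hle => hb'free s hsS ⟨h1', hle⟩), hsIoc.2⟩
      have hcardlt : (Sset V Vm x t ∩ Set.Ioc b' t).ncard < n := by
        rw [hSdrop, ← hcard]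
        exact Set.ncard_diff_singleton_lt_of_mem ⟨hs₁mem.1, hs₁mem.2⟩ (hSfinInt a)
      have hIH := IH _ hcardlt b' hb'0 hb'2 hVb' rfl
      have hfinbInc : {s | s ∈ Set.Ioc b' t ∧ IncreasesThrough V x s}.Finite :=
        Set.Finite.subset (hSfinInt b') (hincsub b' hb'0)
      have hfinbDec : {s | s ∈ Set.Ioc b' t ∧ DecreasesThrough V x s}.Finite :=
        Set.Finite.subset (hSfinInt b') (hdecsub b' hb'0)
      have hjmp0 : (if x < V s₁ then (1:ℝ) else 0) - (if x < Vm s₁ then 1 else 0) = 0 := by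
        rw [hnj, hVs₁, if_neg (lt_irrefl x)]
        ring
      rcases lt_or_gt_of_ne hVa with hVaneg | hVapos <;>
        rcases lt_or_gt_of_ne hVb' with hVb'neg | hVb'pos
      · -- V a < x, V b' < x : local max, contradiction
        exfalso
        apply hnomax
        refine ⟨s₁, hs₁mem.1.1, hVs₁, a, b', has₁, hb'1, ?_⟩
        intro r hr h1 h2
        rcases lt_trichotomy r s₁ with h | h | h
        · have hh := hsignL r h1 h
          have hnx : ¬ x < V r := fun hx => (not_lt.mpr hVaneg.le) (hh.2.mp hx)
          rw [hVs₁]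
          exact (not_lt.mp hnx)
        · rw [h]
        · have hh := hsignR r h h2
          have hnx : ¬ x < V r := fun hx => (not_lt.mpr hVb'neg.le) (hh.2.mpr hx)
          rw [hVs₁]
          exact (not_lt.mp hnx)
      · -- V a < x < V b' : increase through
        have hInc : IncreasesThrough V x s₁ := by
          refine ⟨hs₁0, hVs₁, hcont, min (s₁ - a) (b' - s₁),
            lt_min (by linarith) (by linarith), ?_⟩
          intro r hr habs
          rw [abs_sub_lt_iff] at habs
          constructor
          · intro hrs
            have h1 : a < r := by
              have := min_le_left (s₁ - a) (b' - s₁)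
              linarith [habs.2]
            have hh := hsignL r h1 hrs
            have hnx : ¬ x < V r := fun hx => (not_lt.mpr hVaneg.le) (hh.2.mp hx)
            rw [hVs₁]
            exact lt_of_le_of_ne (not_lt.mp hnx) hh.1
          · intro hsr
            have h2 : r < b' := by
              have := min_le_right (s₁ - a) (b' - s₁)
              linarith [habs.1]
            have hh := hsignR r hsr h2
            rw [hVs₁]
            exact hh.2.mp hVb'pos
        have hAinc : {s | s ∈ Set.Ioc a t ∧ IncreasesThrough V x s}
            = insert s₁ {s | s ∈ Set.Ioc b' t ∧ IncreasesThrough V x s} := by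
          ext s
          simp only [Set.mem_setOf_eq, Set.mem_insert_iff]
          constructor
          · rintro ⟨hsIoc, hI⟩
            by_cases hss : s = s₁
            · exact Or.inl hss
            · have hsS : s ∈ Sset V Vm x t :=
                ⟨⟨lt_of_le_of_lt ha hsIoc.1, hsIoc.2⟩, Or.inl hI.2.1⟩
              have h1' : s₁ < s := lt_of_le_of_ne (hmin s hsS hsIoc.1) (Ne.symm hss)
              have h2' : ¬ s ≤ b' := fun hle => hb'free s hsS ⟨h1', hle⟩
              exact Or.inr ⟨⟨not_le.mp h2', hsIoc.2⟩, hI⟩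
          · rintro (rfl | ⟨hsIoc, hI⟩)
            · exact ⟨hs₁mem.2, hInc⟩
            · exact ⟨⟨by linarith [hsIoc.1], hsIoc.2⟩, hI⟩
        have hAdec : {s | s ∈ Set.Ioc a t ∧ DecreasesThrough V x s}
            = {s | s ∈ Set.Ioc b' t ∧ DecreasesThrough V x s} := by
          ext s
          simp only [Set.mem_setOf_eq]
          constructor
          · rintro ⟨hsIoc, hD⟩
            have hsS : s ∈ Sset V Vm x t :=
              ⟨⟨lt_of_le_of_lt ha hsIoc.1, hsIoc.2⟩, Or.inl (hdecValue s hD)⟩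
            have h1 : s₁ ≤ s := hmin s hsS hsIoc.1
            rcases eq_or_lt_of_le h1 with rfl | h1'
            · exact absurd hD (fun hD' => not_inc_and_dec V x s₁ hInc hD')
            · exact ⟨⟨not_le.mp (fun hle => hb'free s hsS ⟨h1', hle⟩), hsIoc.2⟩, hD⟩
          · rintro ⟨hsIoc, hD⟩
            exact ⟨⟨by linarith [hsIoc.1], hsIoc.2⟩, hD⟩
        have hs₁notinInc : s₁ ∉ {s | s ∈ Set.Ioc b' t ∧ IncreasesThrough V x s} := by
          rintro ⟨hsIoc, -⟩
          linarith [hsIoc.1]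
        rw [hAinc, hAdec, hQsplitGen, Finset.sum_insert hs₁notin, hjmp0,
          Set.ncard_insert_of_notMem hs₁notinInc hfinbInc]
        rw [if_neg (not_lt.mpr hVaneg.le)]
        rw [if_pos hVb'pos] at hIH
        push_cast
        linarith [hIH]
      · -- x < V a, V b' < x : decrease through
        have hDec : DecreasesThrough V x s₁ := by
          refine ⟨hs₁0, by simp only; rw [hVs₁], hcont.neg, min (s₁ - a) (b' - s₁),
            lt_min (by linarith) (by linarith), ?_⟩
          intro r hr habs
          rw [abs_sub_lt_iff] at habs
          constructor
          · intro hrs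
            have h1 : a < r := by
              have := min_le_left (s₁ - a) (b' - s₁)
              linarith [habs.2]
            have hh := hsignL r h1 hrs
            have hx : x < V r := hh.2.mpr hVapos
            simp only [neg_lt_neg_iff]
            rw [hVs₁]
            exact hx
          · intro hsr
            have h2 : r < b' := by
              have := min_le_right (s₁ - a) (b' - s₁)
              linarith [habs.1]
            have hh := hsignR r hsr h2
            have hnx : ¬ x < V r := fun hx => (not_lt.mpr hVb'neg.le) (hh.2.mpr hx)
            simp only [neg_lt_neg_iff]
            rw [hVs₁]
            exact lt_of_le_of_ne (not_lt.mp hnx) hh.1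
        have hAdec : {s | s ∈ Set.Ioc a t ∧ DecreasesThrough V x s}
            = insert s₁ {s | s ∈ Set.Ioc b' t ∧ DecreasesThrough V x s} := by
          ext s
          simp only [Set.mem_setOf_eq, Set.mem_insert_iff]
          constructor
          · rintro ⟨hsIoc, hD⟩
            by_cases hss : s = s₁
            · exact Or.inl hss
            · have hsS : s ∈ Sset V Vm x t :=
                ⟨⟨lt_of_le_of_lt ha hsIoc.1, hsIoc.2⟩, Or.inl (hdecValue s hD)⟩
              have h1' : s₁ < s := lt_of_le_of_ne (hmin s hsS hsIoc.1) (Ne.symm hss)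
              have h2' : ¬ s ≤ b' := fun hle => hb'free s hsS ⟨h1', hle⟩
              exact Or.inr ⟨⟨not_le.mp h2', hsIoc.2⟩, hD⟩
          · rintro (rfl | ⟨hsIoc, hD⟩)
            · exact ⟨hs₁mem.2, hDec⟩
            · exact ⟨⟨by linarith [hsIoc.1], hsIoc.2⟩, hD⟩
        have hAinc : {s | s ∈ Set.Ioc a t ∧ IncreasesThrough V x s}
            = {s | s ∈ Set.Ioc b' t ∧ IncreasesThrough V x s} := by
          ext s
          simp only [Set.mem_setOf_eq]
          constructor
          · rintro ⟨hsIoc, hI⟩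
            have hsS : s ∈ Sset V Vm x t :=
              ⟨⟨lt_of_le_of_lt ha hsIoc.1, hsIoc.2⟩, Or.inl hI.2.1⟩
            have h1 : s₁ ≤ s := hmin s hsS hsIoc.1
            rcases eq_or_lt_of_le h1 with rfl | h1'
            · exact absurd hI (fun hI' => not_inc_and_dec V x s₁ hI' hDec)
            · exact ⟨⟨not_le.mp (fun hle => hb'free s hsS ⟨h1', hle⟩), hsIoc.2⟩, hI⟩
          · rintro ⟨hsIoc, hI⟩
            exact ⟨⟨by linarith [hsIoc.1], hsIoc.2⟩, hI⟩
        have hs₁notinDec : s₁ ∉ {s | s ∈ Set.Ioc b' t ∧ DecreasesThrough V x s} := by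
          rintro ⟨hsIoc, -⟩
          linarith [hsIoc.1]
        rw [hAinc, hAdec, hQsplitGen, Finset.sum_insert hs₁notin, hjmp0,
          Set.ncard_insert_of_notMem hs₁notinDec hfinbDec]
        rw [if_pos hVapos]
        rw [if_neg (not_lt.mpr hVb'neg.le)] at hIH
        push_cast
        linarith [hIH]
      · -- x < V a, x < V b' : local min, contradiction
        exfalso
        apply hnomin
        refine ⟨s₁, hs₁mem.1.1, hVs₁, a, b', has₁, hb'1, ?_⟩
        intro r hr h1 h2
        rcases lt_trichotomy r s₁ with h | h | h
        · have hh := hsignL r h1 h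
          rw [hVs₁]
          exact (hh.2.mpr hVapos).le
        · rw [h]
        · have hh := hsignR r h h2
          rw [hVs₁]
          exact (hh.2.mp hVb'pos).le
    · -- STRADDLE case
      have hVs₁ne : V s₁ ≠ x := by
        rcases hstr with h | h
        exacts [ne_of_lt h.1, ne_of_gt h.2]
      have hVms₁ne : Vm s₁ ≠ x := by
        rcases hstr with h | h
        exacts [ne_of_gt h.2, ne_of_lt h.1]
      have hVmsign : (if x < Vm s₁ then (1:ℝ) else 0) = (if x < V a then 1 else 0) := by
        have hls := leftlim_sign V Vm t x hV_rc hV_ll hjump ha has₁ hs₁t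
          (fun s hs => hfree s hs.1 hs.2) hVa
        rcases lt_or_gt_of_ne hVa with h | h
        · rw [if_neg (not_lt.mpr h.le), if_neg]
          exact not_lt.mpr (lt_of_le_of_ne (hls.2 h) hVms₁ne).le
        · rw [if_pos h, if_pos]
          exact lt_of_le_of_ne (hls.1 h) (Ne.symm hVms₁ne)
      have hAinc : {s | s ∈ Set.Ioc a t ∧ IncreasesThrough V x s}
          = {s | s ∈ Set.Ioc s₁ t ∧ IncreasesThrough V x s} := by
        ext s
        simp only [Set.mem_setOf_eq]
        constructor
        · rintro ⟨hsIoc, hI⟩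
          have hsS : s ∈ Sset V Vm x t :=
            ⟨⟨lt_of_le_of_lt ha hsIoc.1, hsIoc.2⟩, Or.inl hI.2.1⟩
          have hss : s ≠ s₁ := fun h => hVs₁ne (h ▸ hI.2.1)
          exact ⟨⟨lt_of_le_of_ne (hmin s hsS hsIoc.1) (Ne.symm hss), hsIoc.2⟩, hI⟩
        · rintro ⟨hsIoc, hI⟩
          exact ⟨⟨lt_trans has₁ hsIoc.1, hsIoc.2⟩, hI⟩
      have hAdec : {s | s ∈ Set.Ioc a t ∧ DecreasesThrough V x s}
          = {s | s ∈ Set.Ioc s₁ t ∧ DecreasesThrough V x s} := by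
        ext s
        simp only [Set.mem_setOf_eq]
        constructor
        · rintro ⟨hsIoc, hD⟩
          have hsS : s ∈ Sset V Vm x t :=
            ⟨⟨lt_of_le_of_lt ha hsIoc.1, hsIoc.2⟩, Or.inl (hdecValue s hD)⟩
          have hss : s ≠ s₁ := fun h => hVs₁ne (h ▸ hdecValue s hD)
          exact ⟨⟨lt_of_le_of_ne (hmin s hsS hsIoc.1) (Ne.symm hss), hsIoc.2⟩, hD⟩
        · rintro ⟨hsIoc, hD⟩
          exact ⟨⟨lt_trans has₁ hsIoc.1, hsIoc.2⟩, hD⟩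
      have hQsplit : T.filter (· ∈ Set.Ioc a t) = insert s₁ (T.filter (· ∈ Set.Ioc s₁ t)) := by
        ext s
        simp only [Finset.mem_filter, Finset.mem_insert, hSfin.mem_toFinset, hT]
        constructor
        · rintro ⟨hsS, hsIoc⟩
          by_cases hss : s = s₁
          · exact Or.inl hss
          · exact Or.inr ⟨hsS, lt_of_le_of_ne (hmin s hsS hsIoc.1) (Ne.symm hss), hsIoc.2⟩
        · rintro (rfl | ⟨hsS, hsIoc⟩)
          · exact ⟨hs₁mem.1, hs₁mem.2⟩
          · exact ⟨hsS, lt_trans has₁ hsIoc.1, hsIoc.2⟩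
      have hs₁notin : s₁ ∉ T.filter (· ∈ Set.Ioc s₁ t) := by
        simp only [Finset.mem_filter]
        rintro ⟨-, h1, -⟩
        exact lt_irrefl s₁ h1
      have hSdrop : Sset V Vm x t ∩ Set.Ioc s₁ t = (Sset V Vm x t ∩ Set.Ioc a t) \ {s₁} := by
        ext s
        constructor
        · rintro ⟨hsS, hsIoc⟩
          refine ⟨⟨hsS, lt_trans has₁ hsIoc.1, hsIoc.2⟩, ?_⟩
          intro h
          rw [Set.mem_singleton_iff] at h
          rw [h] at hsIoc
          exact lt_irrefl s₁ hsIoc.1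
        · rintro ⟨⟨hsS, hsIoc⟩, hne'⟩
          rw [Set.mem_singleton_iff] at hne'
          exact ⟨hsS, lt_of_le_of_ne (hmin s hsS hsIoc.1) (Ne.symm hne'), hsIoc.2⟩
      have hcardlt : (Sset V Vm x t ∩ Set.Ioc s₁ t).ncard < n := by
        rw [hSdrop, ← hcard]
        exact Set.ncard_diff_singleton_lt_of_mem ⟨hs₁mem.1, hs₁mem.2⟩ (hSfinInt a)
      have hIH := IH _ hcardlt s₁ hs₁0.le hs₁t hVs₁ne rfl
      rw [hAinc, hAdec, hQsplit, Finset.sum_insert hs₁notin, hVmsign]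
      linarith [hIH]

lemma ftc_ind_le (f : ℝ → ℝ) (hf : ContDiff ℝ 1 f) {a b : ℝ} (hab : a ≤ b) :
    Integrable (fun x => deriv f x * ((if x < b then (1:ℝ) else 0)
      - (if x < a then 1 else 0))) volume ∧
    ∫ x, deriv f x * ((if x < b then (1:ℝ) else 0) - (if x < a then 1 else 0)) = f b - f a := by
  have hφ : Continuous (deriv f) := hf.continuous_deriv le_rfl
  have hdiff : ∀ y, DifferentiableAt ℝ f y := fun y => hf.differentiable one_ne_zero y
  have heq : (fun x => deriv f x * ((if x < b then (1:ℝ) else 0) - (if x < a then 1 else 0)))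
      = (Set.Ico a b).indicator (deriv f) := by
    funext x
    rw [Set.indicator_apply]
    simp only [Set.mem_Ico]
    by_cases h1 : x < a
    · have h2 : x < b := lt_of_lt_of_le h1 hab
      rw [if_pos h1, if_pos h2, if_neg (fun hc : a ≤ x ∧ x < b => absurd h1 (not_lt.mpr hc.1))]
      ring
    · by_cases h2 : x < b
      · rw [if_neg h1, if_pos h2, if_pos (⟨not_lt.mp h1, h2⟩ : a ≤ x ∧ x < b)]
        ring
      · rw [if_neg h1, if_neg h2, if_neg (fun hc : a ≤ x ∧ x < b => absurd hc.2 h2)]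
        ring
  have hint : IntegrableOn (deriv f) (Set.Ico a b) volume :=
    (hφ.integrableOn_Icc).mono_set Set.Ico_subset_Icc_self
  constructor
  · rw [heq]
    exact hint.integrable_indicator measurableSet_Ico
  · rw [heq, MeasureTheory.integral_indicator measurableSet_Ico]
    have h1 : ∫ x in Set.Ico a b, deriv f x = ∫ x in Set.Ioc a b, deriv f x := by
      rw [MeasureTheory.integral_Ico_eq_integral_Ioo, MeasureTheory.integral_Ioc_eq_integral_Ioo]
    rw [h1, ← intervalIntegral.integral_of_le hab]
    exact intervalIntegral.integral_deriv_eq_sub' f rfl (fun y _ => hdiff y) hφ.continuousOn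

lemma ftc_ind (f : ℝ → ℝ) (hf : ContDiff ℝ 1 f) (a b : ℝ) :
    Integrable (fun x => deriv f x * ((if x < b then (1:ℝ) else 0)
      - (if x < a then 1 else 0))) volume ∧
    ∫ x, deriv f x * ((if x < b then (1:ℝ) else 0) - (if x < a then 1 else 0)) = f b - f a := by
  rcases le_or_gt a b with hab | hab
  · exact ftc_ind_le f hf hab
  · have h := ftc_ind_le f hf hab.le
    have heq : (fun x => deriv f x * ((if x < b then (1:ℝ) else 0) - (if x < a then 1 else 0)))
        = fun x => -(deriv f x * ((if x < a then (1:ℝ) else 0) - (if x < b then 1 else 0))) := by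
      funext x
      ring
    constructor
    · rw [heq]
      exact h.1.neg
    · rw [heq, MeasureTheory.integral_neg, h.2]
      ring

def jf (V Vm : ℝ → ℝ) (s x : ℝ) : ℝ :=
  (if x < V s then 1 else 0) - (if x < Vm s then 1 else 0)

lemma jf_meas (V Vm : ℝ → ℝ) (s : ℝ) : Measurable (jf V Vm s) := by
  apply Measurable.sub
  · exact measurable_const.ite measurableSet_Iio measurable_const
  · exact measurable_const.ite measurableSet_Iio measurable_const

lemma jf_abs_le (V Vm : ℝ → ℝ) (s x : ℝ) : |jf V Vm s x| ≤ 1 := by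
  unfold jf
  split_ifs <;> norm_num

lemma jf_zero (V Vm : ℝ → ℝ) {s : ℝ} (x : ℝ) (h : Vm s = V s) : jf V Vm s x = 0 := by
  simp [jf, h]

lemma jf_ne_zero {V Vm : ℝ → ℝ} {s x : ℝ} (h : jf V Vm s x ≠ 0) :
    Vm s ≠ V s ∧ ((Vm s ≤ x ∧ x < V s) ∨ (V s ≤ x ∧ x < Vm s)) := by
  unfold jf at h
  by_cases h1 : x < V s <;> by_cases h2 : x < Vm s
  · simp [h1, h2] at h
  · exact ⟨ne_of_lt (lt_of_le_of_lt (not_lt.mp h2) h1), Or.inl ⟨not_lt.mp h2, h1⟩⟩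
  · exact ⟨ne_of_gt (lt_of_le_of_lt (not_lt.mp h1) h2), Or.inr ⟨not_lt.mp h1, h2⟩⟩
  · simp [h1, h2] at h

lemma jf_supp (V Vm : ℝ → ℝ) (s x : ℝ)
    (hx : x ∉ Set.Ico (min (V s) (Vm s)) (max (V s) (Vm s))) : jf V Vm s x = 0 := by
  rw [Set.mem_Ico, not_and_or, not_le, not_lt] at hx
  unfold jf
  rcases hx with h | h
  · rw [if_pos (lt_of_lt_of_le h (min_le_left _ _)),
      if_pos (lt_of_lt_of_le h (min_le_right _ _))]
    ring
  · rw [if_neg (not_lt.mpr (le_trans (le_max_left _ _) h)),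
      if_neg (not_lt.mpr (le_trans (le_max_right _ _) h))]
    ring

lemma ofReal_sub_helper (v : ℝ) :
    (ENNReal.ofReal v).toReal - (ENNReal.ofReal (-v)).toReal = v := by
  rcases le_or_gt 0 v with h | h
  · rw [ENNReal.toReal_ofReal h, ENNReal.ofReal_of_nonpos (by linarith)]
    simp
  · rw [ENNReal.ofReal_of_nonpos h.le, ENNReal.toReal_ofReal (by linarith)]
    simp

end CVLT

/-- second change-of-variables formula. Let `V` be càdlàg on `[0,∞)` with
finite variation on compacts and let `f` be of class `C¹`. Then for every `t > 0`,
`f(V t) − f(V 0) = ∫_ℝ f'(x) ℓ^x(t) dx + Σ_{0<s≤t} (f(V s) − f(V s−))`,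
where `ℓ^x(t)` is well defined for Lebesgue-almost every `x` and the sum is absolutely
convergent. -/
theorem change_of_variables_local_time
    (V Vm : ℝ → ℝ)
    (hV_rc : ∀ s ∈ Set.Ici (0 : ℝ), ContinuousWithinAt V (Set.Ici s) s)
    (hV_ll : ∀ s ∈ Set.Ioi (0 : ℝ),
      Filter.Tendsto V (nhdsWithin s (Set.Iio s)) (nhds (Vm s)))
    (hV_bv : ∀ T : ℝ, BoundedVariationOn V (Set.Icc 0 T))
    (t : ℝ) (ht : 0 < t)
    (f : ℝ → ℝ) (hf : ContDiff ℝ 1 f) :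
    (∀ᵐ x : ℝ ∂volume, (incSet V x t).Finite ∧ (decSet V x t).Finite) ∧
      Summable (fun s : Set.Ioc (0 : ℝ) t => |f (V s.1) - f (Vm s.1)|) ∧
      f (V t) - f (V 0) =
        (∫ x : ℝ, deriv f x * (signedLocalTime V x t : ℝ) ∂volume) +
          ∑' s : Set.Ioc (0 : ℝ) t, (f (V s.1) - f (Vm s.1)) := by
  classical
  have hbv : BoundedVariationOn V (Set.Icc 0 t) := hV_bv t
  set W : ℝ≥0∞ := eVariationOn V (Set.Icc 0 t) with hWdef
  set R : ℝ := W.toReal with hRdef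
  set K : Set ℝ := Set.Icc (V 0 - R) (V 0 + R) with hKdef
  have hφc : Continuous (deriv f) := hf.continuous_deriv le_rfl
  have hVK : ∀ s ∈ Set.Icc (0:ℝ) t, V s ∈ K := by
    intro s hs
    have := CVLT.v_bound V t hbv hs ht.le
    rw [abs_le] at this
    exact ⟨by linarith [this.1], by linarith [this.2]⟩
  have hVmK : ∀ s ∈ Set.Ioc (0:ℝ) t, Vm s ∈ K := by
    intro s hs
    have := CVLT.vm_bound V Vm t hV_ll hbv hs
    rw [abs_le] at this
    exact ⟨by linarith [this.1], by linarith [this.2]⟩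
  obtain ⟨C₀, hC₀⟩ := (isCompact_Icc (a := V 0 - R) (b := V 0 + R)).exists_bound_of_continuousOn
    hφc.continuousOn
  set C : ℝ := max C₀ 0 with hCdef
  have hC : ∀ y ∈ K, |deriv f y| ≤ C := fun y hy => le_trans (hC₀ y hy) (le_max_left _ _)
  have hC0 : (0:ℝ) ≤ C := le_max_right _ _
  have hLip : ∀ y ∈ K, ∀ z ∈ K, |f y - f z| ≤ C * |y - z| := by
    intro y hy z hz
    have := Convex.norm_image_sub_le_of_norm_deriv_le (𝕜 := ℝ) (f := f)
      (fun u _ => hf.differentiable one_ne_zero u)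
      (fun u hu => by rw [Real.norm_eq_abs]; exact hC u hu) (convex_Icc _ _) hz hy
    simpa [Real.norm_eq_abs] using this
  set Jset : Set ℝ := {s | s ∈ Set.Ioc 0 t ∧ Vm s ≠ V s} with hJdef
  have hJc : Jset.Countable := CVLT.countable_jumpSet V Vm t hV_ll hbv
  haveI : Countable ↥Jset := hJc.to_subtype
  -- Conjunct 2 : summability
  have hsum2 : Summable (fun s : Set.Ioc (0:ℝ) t => |f (V s.1) - f (Vm s.1)|) := by
    have h0 := CVLT.summable_jump_sizes V Vm t hV_ll hbv
    refine Summable.of_nonneg_of_le (fun s => abs_nonneg _) (fun s => ?_) (h0.mul_left C)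
    exact hLip _ (hVK s.1 (Set.Ioc_subset_Icc_self s.2)) _ (hVmK s.1 s.2)
  -- bad value sets
  set Bmax : Set ℝ := {x | ∃ s, s ∈ Set.Ioc 0 t ∧ V s = x ∧ ∃ p q : ℝ, p < s ∧ s < q ∧
      ∀ r ∈ Set.Ici (0:ℝ), p < r → r < q → V r ≤ V s} with hBmaxdef
  set Bmin : Set ℝ := {x | ∃ s, s ∈ Set.Ioc 0 t ∧ V s = x ∧ ∃ p q : ℝ, p < s ∧ s < q ∧
      ∀ r ∈ Set.Ici (0:ℝ), p < r → r < q → V s ≤ V r} with hBmindef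
  set B : Set ℝ := {V 0, V t} ∪ V '' Jset ∪ Vm '' Jset ∪ Bmax ∪ Bmin with hBdef
  have hBc : B.Countable := by
    apply Set.Countable.union
    apply Set.Countable.union
    apply Set.Countable.union
    apply Set.Countable.union
    · exact (Set.countable_singleton (V t)).insert (V 0)
    · exact hJc.image V
    · exact hJc.image Vm
    · exact CVLT.countable_localmax V t
    · exact CVLT.countable_localmin V t
  have hae_bad : ∀ᵐ x : ℝ ∂volume, x ∉ B :=
    measure_eq_zero_iff_ae_notMem.mp (hBc.measure_zero volume)
  have hae_lvl := CVLT.ae_finite_level V t ht hbv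
  have hae_str := CVLT.ae_finite_straddle V Vm t hV_ll hbv
  -- abbreviations
  set DS : ℝ → ℝ := fun x => ∑' σ : Jset, CVLT.jf V Vm σ.1 x with hDSdef
  set Ppos : ℝ → ℝ≥0∞ := fun x => ∑' σ : Jset, ENNReal.ofReal (CVLT.jf V Vm σ.1 x) with hPposdef
  set Pneg : ℝ → ℝ≥0∞ := fun x => ∑' σ : Jset, ENNReal.ofReal (-(CVLT.jf V Vm σ.1 x)) with hPnegdef
  -- key pointwise lemma for good x
  have hkey : ∀ x : ℝ,
      {s | s ∈ Set.Icc 0 t ∧ V s = x}.Finite →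
      {s | s ∈ Set.Ioc 0 t ∧ (V s < x ∧ x < Vm s ∨ Vm s < x ∧ x < V s)}.Finite →
      x ∉ B →
      (incSet V x t).Finite ∧ (decSet V x t).Finite ∧
        ((signedLocalTime V x t : ℝ) =
          ((if x < V t then (1:ℝ) else 0) - (if x < V 0 then 1 else 0)) - DS x) ∧
        ((‖deriv f x * DS x‖₊ : ℝ≥0∞) ≤
          ∑' σ : Jset, (‖deriv f x * CVLT.jf V Vm σ.1 x‖₊ : ℝ≥0∞)) ∧
        (DS x = (Ppos x).toReal - (Pneg x).toReal) := by
    intro x hlvl hstr hB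
    have h0x : V 0 ≠ x := by
      intro h
      apply hB
      rw [hBdef, ← h]
      left; left; left; left
      exact Set.mem_insert _ _
    have hTx : V t ≠ x := by
      intro h
      apply hB
      rw [hBdef, ← h]
      left; left; left; left
      exact Set.mem_insert_of_mem _ rfl
    have hjumpx : ∀ s, s ∈ Set.Ioc 0 t → Vm s ≠ V s → V s ≠ x ∧ Vm s ≠ x := by
      intro s hs hne
      constructor
      · intro h
        apply hB
        rw [hBdef, ← h]
        left; left; left; right
        exact ⟨s, ⟨hs, hne⟩, rfl⟩
      · intro h
        apply hB
        rw [hBdef, ← h]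
        left; left; right
        exact ⟨s, ⟨hs, hne⟩, rfl⟩
    have hnomax : ¬ ∃ s, s ∈ Set.Ioc 0 t ∧ V s = x ∧ ∃ p q : ℝ, p < s ∧ s < q ∧
        ∀ r ∈ Set.Ici (0:ℝ), p < r → r < q → V r ≤ V s := by
      intro h
      apply hB
      rw [hBdef]
      left; right
      rw [hBmaxdef]
      exact h
    have hnomin : ¬ ∃ s, s ∈ Set.Ioc 0 t ∧ V s = x ∧ ∃ p q : ℝ, p < s ∧ s < q ∧
        ∀ r ∈ Set.Ici (0:ℝ), p < r → r < q → V s ≤ V r := by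
      intro h
      apply hB
      rw [hBdef]
      right
      rw [hBmindef]
      exact h
    have hSfinx : (CVLT.Sset V Vm x t).Finite := by
      apply Set.Finite.subset (hlvl.union hstr)
      rintro s ⟨hs, h | h | h⟩
      · exact Or.inl ⟨Set.Ioc_subset_Icc_self hs, h⟩
      · exact Or.inr ⟨hs, Or.inl h⟩
      · exact Or.inr ⟨hs, Or.inr h⟩
    have hincfin : (incSet V x t).Finite := by
      apply hlvl.subset
      rintro s ⟨hs, hI⟩
      exact ⟨Set.Ioc_subset_Icc_self hs, hI.2.1⟩
    have hdecfin : (decSet V x t).Finite := by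
      apply hlvl.subset
      rintro s ⟨hs, hD⟩
      refine ⟨Set.Ioc_subset_Icc_self hs, ?_⟩
      have := hD.2.1
      simp only at this
      linarith
    -- crossing count
    have hcc := CVLT.crossing_count V Vm t ht x hV_rc hV_ll hTx hjumpx hSfinx
      hnomax hnomin ((CVLT.Sset V Vm x t ∩ Set.Ioc 0 t).ncard) 0 le_rfl ht.le h0x rfl
    have hfil : hSfinx.toFinset.filter (· ∈ Set.Ioc (0:ℝ) t) = hSfinx.toFinset := by
      apply Finset.filter_true_of_mem
      intro s hs
      exact (hSfinx.mem_toFinset.mp hs).1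
    rw [hfil] at hcc
    -- support finset
    have hfinsupp : {σ : ↥Jset | CVLT.jf V Vm σ.1 x ≠ 0}.Finite := by
      refine Set.Finite.subset (hstr.preimage
        (Subtype.coe_injective.injOn)) ?_
      intro σ hσ
      have h := CVLT.jf_ne_zero hσ
      have hj := hjumpx σ.1 σ.2.1 σ.2.2
      rcases h.2 with ⟨h1, h2⟩ | ⟨h1, h2⟩
      · exact ⟨σ.2.1, Or.inr ⟨lt_of_le_of_ne h1 hj.2, h2⟩⟩
      · exact ⟨σ.2.1, Or.inl ⟨lt_of_le_of_ne h1 hj.1, h2⟩⟩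
    set T' : Finset ↥Jset := hfinsupp.toFinset with hT'def
    have hT'mem : ∀ σ : ↥Jset, σ ∉ T' → CVLT.jf V Vm σ.1 x = 0 := by
      intro σ hσ
      by_contra h0
      exact hσ (hfinsupp.mem_toFinset.mpr h0)
    have hDS1 : DS x = ∑ σ ∈ T', CVLT.jf V Vm σ.1 x := by
      simp only [hDSdef]
      exact tsum_eq_sum hT'mem
    -- DS x as a sum over the S-finset
    have hDSx : DS x = ∑ s ∈ hSfinx.toFinset,
        ((if x < V s then (1:ℝ) else 0) - (if x < Vm s then 1 else 0)) := by
      rw [hDS1]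
      have h2 : ∑ s ∈ T'.image (fun σ : ↥Jset => σ.1), CVLT.jf V Vm s x
          = ∑ σ ∈ T', CVLT.jf V Vm σ.1 x :=
        Finset.sum_image (fun σ _ τ _ h => Subtype.coe_injective h)
      rw [← h2]
      have hvan1 : ∀ s ∈ T'.image (fun σ : ↥Jset => σ.1),
          s ∉ T'.image (fun σ : ↥Jset => σ.1) ∩ hSfinx.toFinset → CVLT.jf V Vm s x = 0 := by
        intro s hsU hsnot
        by_contra h0
        apply hsnot
        rw [Finset.mem_inter]
        refine ⟨hsU, hSfinx.mem_toFinset.mpr ?_⟩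
        obtain ⟨σ, hσ, rfl⟩ := Finset.mem_image.mp hsU
        have h := CVLT.jf_ne_zero h0
        have hj := hjumpx σ.1 σ.2.1 σ.2.2
        rcases h.2 with ⟨h1, h2'⟩ | ⟨h1, h2'⟩
        · exact ⟨σ.2.1, Or.inr (Or.inr ⟨lt_of_le_of_ne h1 hj.2, h2'⟩)⟩
        · exact ⟨σ.2.1, Or.inr (Or.inl ⟨lt_of_le_of_ne h1 hj.1, h2'⟩)⟩
      have hvan2 : ∀ s ∈ hSfinx.toFinset,
          s ∉ T'.image (fun σ : ↥Jset => σ.1) ∩ hSfinx.toFinset → CVLT.jf V Vm s x = 0 := by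
        intro s hsT hsnot
        by_contra h0
        apply hsnot
        rw [Finset.mem_inter]
        refine ⟨?_, hsT⟩
        have hsS := hSfinx.mem_toFinset.mp hsT
        have hne : Vm s ≠ V s := (CVLT.jf_ne_zero h0).1
        have hσ : (⟨s, ⟨hsS.1, hne⟩⟩ : ↥Jset) ∈ T' := hfinsupp.mem_toFinset.mpr h0
        exact Finset.mem_image.mpr ⟨_, hσ, rfl⟩
      calc ∑ s ∈ T'.image (fun σ : ↥Jset => σ.1), CVLT.jf V Vm s x
          = ∑ s ∈ T'.image (fun σ : ↥Jset => σ.1) ∩ hSfinx.toFinset, CVLT.jf V Vm s x :=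
            (Finset.sum_subset Finset.inter_subset_left hvan1).symm
        _ = ∑ s ∈ hSfinx.toFinset, CVLT.jf V Vm s x :=
            Finset.sum_subset Finset.inter_subset_right hvan2
        _ = _ := rfl
    refine ⟨hincfin, hdecfin, ?_, ?_, ?_⟩
    · -- the identity
      rw [hDSx]
      have hcast : (signedLocalTime V x t : ℝ)
          = ((incSet V x t).ncard : ℝ) - ((decSet V x t).ncard : ℝ) := by
        rw [signedLocalTime]
        push_cast
        ring
      rw [hcast]
      have hcc' : ((if x < V t then (1:ℝ) else 0) - (if x < V 0 then 1 else 0)) =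
          ((incSet V x t).ncard : ℝ) - ((decSet V x t).ncard : ℝ)
          + ∑ s ∈ hSfinx.toFinset,
              ((if x < V s then (1:ℝ) else 0) - (if x < Vm s then 1 else 0)) := hcc
      linarith [hcc']
    · -- the norm bound
      rw [hDS1, Finset.mul_sum]
      calc (‖∑ σ ∈ T', deriv f x * CVLT.jf V Vm σ.1 x‖₊ : ℝ≥0∞)
          = ENNReal.ofReal ‖∑ σ ∈ T', deriv f x * CVLT.jf V Vm σ.1 x‖ :=
            (ENNReal.ofReal_eq_coe_nnreal (norm_nonneg _)).symm
        _ ≤ ENNReal.ofReal (∑ σ ∈ T', ‖deriv f x * CVLT.jf V Vm σ.1 x‖) := by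
            apply ENNReal.ofReal_le_ofReal
            exact norm_sum_le _ _
        _ = ∑ σ ∈ T', ENNReal.ofReal ‖deriv f x * CVLT.jf V Vm σ.1 x‖ :=
            ENNReal.ofReal_sum_of_nonneg (fun σ _ => norm_nonneg _)
        _ = ∑ σ ∈ T', (‖deriv f x * CVLT.jf V Vm σ.1 x‖₊ : ℝ≥0∞) := by
            apply Finset.sum_congr rfl
            intro σ _
            exact ENNReal.ofReal_eq_coe_nnreal (norm_nonneg _)
        _ ≤ _ := ENNReal.sum_le_tsum T'
    · -- DS via Ppos/Pneg
      have hp1 : Ppos x = ∑ σ ∈ T', ENNReal.ofReal (CVLT.jf V Vm σ.1 x) := by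
        simp only [hPposdef]
        exact tsum_eq_sum (fun σ hσ => by rw [hT'mem σ hσ, ENNReal.ofReal_zero])
      have hp2 : Pneg x = ∑ σ ∈ T', ENNReal.ofReal (-(CVLT.jf V Vm σ.1 x)) := by
        simp only [hPnegdef]
        exact tsum_eq_sum (fun σ hσ => by rw [hT'mem σ hσ, neg_zero, ENNReal.ofReal_zero])
      rw [hDS1, hp1, hp2, ENNReal.toReal_sum (fun σ _ => ENNReal.ofReal_ne_top),
        ENNReal.toReal_sum (fun σ _ => ENNReal.ofReal_ne_top), ← Finset.sum_sub_distrib]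
      apply Finset.sum_congr rfl
      intro σ _
      exact (CVLT.ofReal_sub_helper _).symm
  -- now the a.e. versions
  have hGood : ∀ᵐ x : ℝ ∂volume,
      (incSet V x t).Finite ∧ (decSet V x t).Finite ∧
        ((signedLocalTime V x t : ℝ) =
          ((if x < V t then (1:ℝ) else 0) - (if x < V 0 then 1 else 0)) - DS x) ∧
        ((‖deriv f x * DS x‖₊ : ℝ≥0∞) ≤
          ∑' σ : Jset, (‖deriv f x * CVLT.jf V Vm σ.1 x‖₊ : ℝ≥0∞)) ∧
        (DS x = (Ppos x).toReal - (Pneg x).toReal) := by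
    filter_upwards [hae_lvl, hae_str, hae_bad] with x h1 h2 h3
    exact hkey x h1 h2 h3
  refine ⟨hGood.mono (fun x hx => ⟨hx.1, hx.2.1⟩), hsum2, ?_⟩
  -- measurability
  have hPm : Measurable Ppos :=
    Measurable.ennreal_tsum (fun σ => ENNReal.measurable_ofReal.comp (CVLT.jf_meas V Vm σ.1))
  have hNm : Measurable Pneg :=
    Measurable.ennreal_tsum (fun σ =>
      ENNReal.measurable_ofReal.comp (CVLT.jf_meas V Vm σ.1).neg)
  have hDSaesm : AEStronglyMeasurable DS volume := by
    refine AEStronglyMeasurable.congr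
      ((hPm.ennreal_toReal.sub hNm.ennreal_toReal).aestronglyMeasurable) ?_
    filter_upwards [hGood] with x hx
    exact hx.2.2.2.2.symm
  -- per jump lintegral bound
  have hlint_each : ∀ σ : ↥Jset, ∫⁻ x, (‖deriv f x * CVLT.jf V Vm σ.1 x‖₊ : ℝ≥0∞)
      ≤ ENNReal.ofReal C * ENNReal.ofReal |V σ.1 - Vm σ.1| := by
    intro σ
    have hptw : ∀ x, (‖deriv f x * CVLT.jf V Vm σ.1 x‖₊ : ℝ≥0∞) ≤
        (Set.Ico (min (V σ.1) (Vm σ.1)) (max (V σ.1) (Vm σ.1))).indicator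
          (fun _ => ENNReal.ofReal C) x := by
      intro x
      by_cases hx : x ∈ Set.Ico (min (V σ.1) (Vm σ.1)) (max (V σ.1) (Vm σ.1))
      · rw [Set.indicator_of_mem hx, show ((‖deriv f x * CVLT.jf V Vm σ.1 x‖₊ : ℝ≥0∞)) = ENNReal.ofReal ‖deriv f x * CVLT.jf V Vm σ.1 x‖ from (ENNReal.ofReal_eq_coe_nnreal (norm_nonneg _)).symm]
        apply ENNReal.ofReal_le_ofReal
        have hxK : x ∈ K := by
          have hVσ := hVK σ.1 (Set.Ioc_subset_Icc_self σ.2.1)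
          have hVmσ := hVmK σ.1 σ.2.1
          constructor
          · refine le_trans ?_ hx.1
            exact le_min hVσ.1 hVmσ.1
          · refine le_trans hx.2.le ?_
            exact max_le hVσ.2 hVmσ.2
        rw [Real.norm_eq_abs, abs_mul]
        calc |deriv f x| * |CVLT.jf V Vm σ.1 x| ≤ C * 1 :=
              mul_le_mul (hC x hxK) (CVLT.jf_abs_le V Vm σ.1 x) (abs_nonneg _) hC0
          _ = C := mul_one C
      · rw [Set.indicator_of_notMem hx, CVLT.jf_supp V Vm σ.1 x hx]
        simp
    calc ∫⁻ x, (‖deriv f x * CVLT.jf V Vm σ.1 x‖₊ : ℝ≥0∞)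
        ≤ ∫⁻ x, (Set.Ico (min (V σ.1) (Vm σ.1)) (max (V σ.1) (Vm σ.1))).indicator
            (fun _ => ENNReal.ofReal C) x := lintegral_mono hptw
      _ = ENNReal.ofReal C * volume (Set.Ico (min (V σ.1) (Vm σ.1)) (max (V σ.1) (Vm σ.1))) := by
          rw [lintegral_indicator measurableSet_Ico]
          simp [mul_comm]
      _ = ENNReal.ofReal C * ENNReal.ofReal |V σ.1 - Vm σ.1| := by
          rw [Real.volume_Ico, max_sub_min_eq_abs]
          rw [abs_sub_comm]
  have htsum_fin : ∑' σ : ↥Jset, ∫⁻ x, (‖deriv f x * CVLT.jf V Vm σ.1 x‖₊ : ℝ≥0∞) ≠ ⊤ := by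
    apply ne_top_of_le_ne_top (b := ENNReal.ofReal C * W)
    · exact ENNReal.mul_ne_top ENNReal.ofReal_ne_top hbv
    · calc ∑' σ : ↥Jset, ∫⁻ x, (‖deriv f x * CVLT.jf V Vm σ.1 x‖₊ : ℝ≥0∞)
          ≤ ∑' σ : ↥Jset, ENNReal.ofReal C * ENNReal.ofReal |V σ.1 - Vm σ.1| :=
            ENNReal.tsum_le_tsum hlint_each
        _ = ENNReal.ofReal C * ∑' σ : ↥Jset, ENNReal.ofReal |V σ.1 - Vm σ.1| :=
            ENNReal.tsum_mul_left
        _ ≤ ENNReal.ofReal C * W := by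
            gcongr
            exact CVLT.jump_tsum_le V Vm t hV_ll Jset (fun s hs => hs.1)
  -- integrability of deriv f * DS
  have hφDS_int : Integrable (fun x => deriv f x * DS x) volume := by
    refine ⟨hφc.aestronglyMeasurable.mul hDSaesm, ?_⟩
    show (∫⁻ x, (‖deriv f x * DS x‖₊ : ℝ≥0∞) ∂volume) < ⊤
    calc ∫⁻ x, (‖deriv f x * DS x‖₊ : ℝ≥0∞)
        ≤ ∫⁻ x, ∑' σ : Jset, (‖deriv f x * CVLT.jf V Vm σ.1 x‖₊ : ℝ≥0∞) := by
          apply lintegral_mono_ae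
          filter_upwards [hGood] with x hx
          exact hx.2.2.2.1
      _ = ∑' σ : Jset, ∫⁻ x, (‖deriv f x * CVLT.jf V Vm σ.1 x‖₊ : ℝ≥0∞) :=
          lintegral_tsum (fun σ =>
            ((hφc.measurable.mul (CVLT.jf_meas V Vm σ.1)).nnnorm.coe_nnreal_ennreal).aemeasurable)
      _ < ⊤ := lt_top_iff_ne_top.mpr htsum_fin
  -- swap integral and sum
  have hswap : ∫ x, deriv f x * DS x = ∑' σ : ↥Jset, ∫ x, deriv f x * CVLT.jf V Vm σ.1 x := by
    have h1 : ∀ x, deriv f x * DS x = ∑' σ : ↥Jset, deriv f x * CVLT.jf V Vm σ.1 x := by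
      intro x
      simp only [hDSdef]
      exact (tsum_mul_left).symm
    calc ∫ x, deriv f x * DS x = ∫ x, ∑' σ : ↥Jset, deriv f x * CVLT.jf V Vm σ.1 x := by
          congr 1
          funext x
          exact h1 x
      _ = ∑' σ : ↥Jset, ∫ x, deriv f x * CVLT.jf V Vm σ.1 x :=
          integral_tsum (fun σ =>
            (hφc.measurable.mul (CVLT.jf_meas V Vm σ.1)).aestronglyMeasurable) htsum_fin
  have heach : ∀ σ : ↥Jset, ∫ x, deriv f x * CVLT.jf V Vm σ.1 x = f (V σ.1) - f (Vm σ.1) := by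
    intro σ
    have := (CVLT.ftc_ind f hf (Vm σ.1) (V σ.1)).2
    simpa [CVLT.jf] using this
  -- main integral computation
  have hftcG := CVLT.ftc_ind f hf (V 0) (V t)
  have hmain : ∫ x : ℝ, deriv f x * (signedLocalTime V x t : ℝ)
      = (f (V t) - f (V 0)) - ∑' σ : ↥Jset, (f (V σ.1) - f (Vm σ.1)) := by
    have hcongr : ∫ x : ℝ, deriv f x * (signedLocalTime V x t : ℝ)
        = ∫ x, (deriv f x * ((if x < V t then (1:ℝ) else 0) - (if x < V 0 then 1 else 0))
            - deriv f x * DS x) := by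
      apply integral_congr_ae
      filter_upwards [hGood] with x hx
      rw [hx.2.2.1]
      ring
    rw [hcongr, integral_sub hftcG.1 hφDS_int, hftcG.2, hswap, tsum_congr heach]
  -- identify the two tsums
  have htsum_eq : ∑' s : Set.Ioc (0:ℝ) t, (f (V s.1) - f (Vm s.1))
      = ∑' σ : ↥Jset, (f (V σ.1) - f (Vm σ.1)) := by
    set q : ℝ → ℝ := fun s => if s ∈ Set.Ioc (0:ℝ) t then f (V s) - f (Vm s) else 0 with hqdef
    have hsupp1 : Function.support q ⊆ Set.Ioc (0:ℝ) t := by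
      intro s hs
      by_contra h
      apply hs
      simp only [hqdef]
      rw [if_neg h]
    have hsupp2 : Function.support q ⊆ Jset := by
      intro s hs
      have hq : q s ≠ 0 := hs
      by_cases hmem : s ∈ Set.Ioc (0:ℝ) t
      · refine ⟨hmem, fun heq => hq ?_⟩
        simp only [hqdef]
        rw [if_pos hmem, heq, sub_self]
      · refine absurd ?_ hq
        simp only [hqdef]
        rw [if_neg hmem]
    calc ∑' s : Set.Ioc (0:ℝ) t, (f (V s.1) - f (Vm s.1))
        = ∑' s : Set.Ioc (0:ℝ) t, q s.1 := by
          apply tsum_congr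
          intro s
          simp only [hqdef]
          rw [if_pos s.2]
      _ = ∑' s : ℝ, q s := tsum_subtype_eq_of_support_subset hsupp1
      _ = ∑' σ : ↥Jset, q σ.1 := (tsum_subtype_eq_of_support_subset hsupp2).symm
      _ = ∑' σ : ↥Jset, (f (V σ.1) - f (Vm σ.1)) := by
          apply tsum_congr
          intro σ
          simp only [hqdef]
          rw [if_pos σ.2.1]
  rw [hmain, htsum_eq]
  ring
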